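/- arXiv:2010.03696 — 5 statements merged into one kernel-verified Lean document; each statement's English description precedes it below -/
import Mathlib

section
/- The number of k-free integers up to X equals X/ζ(k) + O(X^{1/k}), i.e. there exists a constant C (depending on k) such that for all X ≥ 1, |∑_{n≤X} μ_k(n) − X/ζ(k)| ≤ C·X^{1/k}. -/
open Classical Finset ArithmeticFunction ArithmeticFunction.Moebius ArithmeticFunction.zeta

namespace KfreeAux

noncomputable def kRad (k n : ℕ) : ℕ := ∏ p ∈ n.primeFactors, p ^ (n.factorization p / k)

lemma kRad_ne_zero {k n : ℕ} (hn : n ≠ 0) : kRad k n ≠ 0 :=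
  Finset.prod_ne_zero_iff.mpr fun p hp =>
    pow_ne_zero _ (Nat.prime_of_mem_primeFactors hp).ne_zero

lemma factorization_kRad {k n : ℕ} (hn : n ≠ 0) (p : ℕ) :
    (kRad k n).factorization p = n.factorization p / k := by
  rw [kRad, Nat.factorization_prod
    (fun q hq => pow_ne_zero _ (Nat.prime_of_mem_primeFactors hq).ne_zero)]
  rw [Finset.sum_apply']
  by_cases hp : p ∈ n.primeFactors
  · rw [Finset.sum_eq_single p]
    · rw [Nat.Prime.factorization_pow (Nat.prime_of_mem_primeFactors hp), Finsupp.single_apply]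
      simp
    · intro q hq hqp
      rw [Nat.Prime.factorization_pow (Nat.prime_of_mem_primeFactors hq), Finsupp.single_apply]
      simp [hqp]
    · intro h; exact absurd hp h
  · have h0 : n.factorization p = 0 := by
      rwa [← Nat.support_factorization, Finsupp.notMem_support_iff] at hp
    rw [h0, Nat.zero_div]
    refine Finset.sum_eq_zero fun q hq => ?_
    rw [Nat.Prime.factorization_pow (Nat.prime_of_mem_primeFactors hq), Finsupp.single_apply]
    have : q ≠ p := fun h => hp (h ▸ hq)
    simp [this]

lemma pow_dvd_iff_dvd_kRad {k n : ℕ} (hn : n ≠ 0) (hk : k ≠ 0) (d : ℕ) :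
    d ^ k ∣ n ↔ d ∣ kRad k n := by
  rcases eq_or_ne d 0 with rfl | hd
  · simp only [zero_pow hk, zero_dvd_iff]
    exact ⟨fun h => absurd h hn, fun h => absurd h (kRad_ne_zero hn)⟩
  · rw [← Nat.factorization_le_iff_dvd (pow_ne_zero _ hd) hn,
      ← Nat.factorization_le_iff_dvd hd (kRad_ne_zero hn), Nat.factorization_pow,
      Finsupp.le_def, Finsupp.le_def]
    constructor
    · intro h p
      have := h p
      rw [Finsupp.smul_apply, smul_eq_mul] at this
      rw [factorization_kRad hn p]
      exact Nat.le_div_iff_mul_le (Nat.pos_of_ne_zero hk) |>.mpr (by rw [Nat.mul_comm]; exact this)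
    · intro h p
      have := h p
      rw [factorization_kRad hn p, Nat.le_div_iff_mul_le (Nat.pos_of_ne_zero hk)] at this
      rw [Finsupp.smul_apply, smul_eq_mul, Nat.mul_comm]
      exact this

lemma kRad_eq_one_iff {k n : ℕ} (hn : n ≠ 0) (hk : k ≠ 0) :
    kRad k n = 1 ↔ ∀ p : ℕ, p.Prime → ¬ p ^ k ∣ n := by
  constructor
  · intro h p hp hdvd
    have := (pow_dvd_iff_dvd_kRad hn hk p).mp hdvd
    rw [h, Nat.dvd_one] at this
    exact hp.ne_one this
  · intro h
    by_contra h1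
    obtain ⟨p, pp, pdvd⟩ := Nat.exists_prime_and_dvd h1
    exact h p pp ((pow_dvd_iff_dvd_kRad hn hk p).mpr pdvd)

lemma sum_divisors_moebius (m : ℕ) :
    ∑ d ∈ m.divisors, (μ d : ℝ) = if m = 1 then 1 else 0 := by
  rcases eq_or_ne m 0 with rfl | hm
  · simp
  · have h := congrFun (congrArg (fun f : ArithmeticFunction ℝ => (f : ℕ → ℝ))
      (coe_moebius_mul_coe_zeta (R := ℝ))) m
    simp only [mul_apply, one_apply] at h
    rw [← h, ← Nat.sum_divisorsAntidiagonal (fun a _ => (μ a : ℝ))]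
    refine Finset.sum_congr rfl fun x hx => ?_
    obtain ⟨he, h0⟩ := Nat.mem_divisorsAntidiagonal.mp hx
    have hx2 : x.2 ≠ 0 := fun h2 => h0 (by rw [← he, h2, mul_zero])
    simp [intCoe_apply, natCoe_apply, zeta_apply, hx2]

lemma key_ineq {k : ℕ} (hk : 2 ≤ k) {m : ℝ} (hm : 1 ≤ m) :
    ((m + 1) ^ k)⁻¹ ≤ (m ^ (k - 1))⁻¹ - ((m + 1) ^ (k - 1))⁻¹ := by
  obtain ⟨j, rfl⟩ : ∃ j, k = j + 1 := ⟨k - 1, by omega⟩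
  have hj : 1 ≤ j := by omega
  simp only [Nat.add_sub_cancel]
  have hm0 : (0:ℝ) < m := by linarith
  have hA : (0:ℝ) < m ^ j := pow_pos hm0 j
  have hB : (0:ℝ) < (m + 1) ^ j := pow_pos (by linarith) j
  have hB1 : (0:ℝ) < (m + 1) ^ (j + 1) := pow_pos (by linarith) (j + 1)
  have h2 : m ^ j * (m + 2) ≤ (m + 1) ^ (j + 1) := by
    have hber : 1 + (↑(j + 1) : ℝ) * (1 / m) ≤ (1 + 1 / m) ^ (j + 1) :=
      one_add_mul_le_pow (le_trans (by norm_num : (-2:ℝ) ≤ 0) (by positivity)) (j + 1)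
    have h1 : (1 + 1 / m) ^ (j + 1) * m ^ (j + 1) = (m + 1) ^ (j + 1) := by
      rw [← mul_pow]
      congr 1
      field_simp
    have e1 : (1 + (↑(j + 1) : ℝ) * (1 / m)) * m ^ (j + 1)
        = m ^ (j + 1) + (↑(j + 1) : ℝ) * m ^ j := by
      rw [pow_succ]
      field_simp
    have hj2 : (2:ℝ) ≤ (↑(j + 1) : ℝ) := by exact_mod_cast (by omega : 2 ≤ j + 1)
    calc m ^ j * (m + 2) ≤ m ^ (j + 1) + (↑(j + 1) : ℝ) * m ^ j := by
          rw [pow_succ]; nlinarith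
      _ = (1 + (↑(j + 1) : ℝ) * (1 / m)) * m ^ (j + 1) := e1.symm
      _ ≤ (1 + 1 / m) ^ (j + 1) * m ^ (j + 1) :=
          mul_le_mul_of_nonneg_right hber (by positivity)
      _ = (m + 1) ^ (j + 1) := h1
  rw [le_sub_iff_add_le, ← one_div, ← one_div, ← one_div,
    div_add_div _ _ (ne_of_gt hB1) (ne_of_gt hB), div_le_div_iff₀ (by positivity) hA]
  have hps : (m + 1) ^ (j + 1) = (m + 1) ^ j * (m + 1) := pow_succ _ _
  nlinarith [mul_le_mul_of_nonneg_left h2 hB.le]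

lemma sum_Icc_tail {k D : ℕ} (hk : 2 ≤ k) (hD : 1 ≤ D) (M : ℕ) :
    ∑ d ∈ Finset.Icc (D + 1) M, ((d:ℝ) ^ k)⁻¹ ≤ ((D:ℝ) ^ (k - 1))⁻¹ := by
  have main : ∀ M : ℕ, D ≤ M →
      ∑ d ∈ Finset.Icc (D + 1) M, ((d:ℝ) ^ k)⁻¹
        ≤ ((D:ℝ) ^ (k - 1))⁻¹ - ((M:ℝ) ^ (k - 1))⁻¹ := by
    intro M
    induction M with
    | zero => intro h; interval_cases D <;> simp at hD ⊢
    | succ M ih =>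
      intro hDM
      rcases Nat.lt_or_ge M D with hlt | hge
      · have : D = M + 1 := by omega
        subst this
        simp
      · rw [Finset.sum_Icc_succ_top (by omega : D + 1 ≤ M + 1)]
        have hM1 : (1:ℝ) ≤ (M:ℝ) := by exact_mod_cast (by omega : 1 ≤ M)
        have hkey := key_ineq hk hM1
        have := ih hge
        push_cast
        push_cast at hkey this ⊢
        linarith
  calc ∑ d ∈ Finset.Icc (D + 1) M, ((d:ℝ) ^ k)⁻¹
      ≤ ∑ d ∈ Finset.Icc (D + 1) (max M D), ((d:ℝ) ^ k)⁻¹ := by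
        refine Finset.sum_le_sum_of_subset_of_nonneg
          (Finset.Icc_subset_Icc le_rfl (le_max_left _ _)) (fun i _ _ => by positivity)
    _ ≤ ((D:ℝ) ^ (k - 1))⁻¹ - ((((max M D : ℕ)):ℝ) ^ (k - 1))⁻¹ := main _ (le_max_right _ _)
    _ ≤ ((D:ℝ) ^ (k - 1))⁻¹ := by
        have : (0:ℝ) ≤ (((max M D : ℕ):ℝ) ^ (k - 1))⁻¹ := by positivity
        linarith

lemma summable_h {k D : ℕ} (hk : 2 ≤ k) :
    Summable (fun d : ℕ => if D < d then ((d:ℝ) ^ k)⁻¹ else 0) := by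
  refine Summable.of_nonneg_of_le (fun d => by positivity) (fun d => ?_)
    (Real.summable_nat_pow_inv.mpr (by omega : 1 < k))
  by_cases h : D < d <;> simp [h] <;> positivity

lemma tsum_h_le {k D : ℕ} (hk : 2 ≤ k) (hD : 1 ≤ D) :
    ∑' d : ℕ, (if D < d then ((d:ℝ) ^ k)⁻¹ else 0) ≤ ((D:ℝ) ^ (k - 1))⁻¹ := by
  refine Summable.tsum_le_of_sum_le (summable_h hk) (fun s => ?_)
  rw [Finset.sum_ite, Finset.sum_const, smul_zero, add_zero]
  calc ∑ d ∈ s.filter (fun d => D < d), ((d:ℝ) ^ k)⁻¹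
      ≤ ∑ d ∈ Finset.Icc (D + 1) (s.sup _root_.id), ((d:ℝ) ^ k)⁻¹ := by
        refine Finset.sum_le_sum_of_subset_of_nonneg (fun d hd => ?_) (fun i _ _ => by positivity)
        rw [Finset.mem_filter] at hd
        rw [Finset.mem_Icc]
        exact ⟨by omega, Finset.le_sup (f := _root_.id) hd.1⟩
    _ ≤ ((D:ℝ) ^ (k - 1))⁻¹ := sum_Icc_tail hk hD _

lemma abs_moebius_real_le_one (d : ℕ) : |(μ d : ℝ)| ≤ 1 := by
  exact_mod_cast (abs_moebius_le_one (n := d) : |μ d| ≤ 1)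

lemma summable_f {k : ℕ} (hk : 2 ≤ k) :
    Summable (fun d : ℕ => (μ d : ℝ) / (d : ℝ) ^ k) := by
  refine Summable.of_norm_bounded (Real.summable_nat_pow_inv.mpr (by omega : 1 < k))
    (fun d => ?_)
  rcases eq_or_ne d 0 with rfl | hd
  · simp
  · have hpos : (0:ℝ) < (d:ℝ) ^ k := by positivity
    rw [Real.norm_eq_abs, abs_div, abs_of_pos hpos, ← one_div, div_le_div_iff₀ hpos hpos]
    have := abs_moebius_real_le_one d
    nlinarith

lemma moebius_zeta {k : ℕ} (hk : 2 ≤ k) :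
    (∑' d : ℕ, (μ d : ℝ) / (d : ℝ) ^ k) * (∑' n : ℕ, (1:ℝ) / ((n:ℝ) + 1) ^ k) = 1 := by
  have hs : 1 < ((k : ℂ)).re := by
    rw [Complex.natCast_re]
    exact_mod_cast (by omega : 1 < k)
  have hmain := LSeries_zeta_mul_Lseries_moebius (s := (k : ℂ)) hs
  have hμ : LSeries (fun n => ((μ n : ℤ) : ℂ)) (k : ℂ)
      = ((∑' d : ℕ, (μ d : ℝ) / (d : ℝ) ^ k : ℝ) : ℂ) := by
    rw [Complex.ofReal_tsum, LSeries]
    refine tsum_congr fun n => ?_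
    rcases eq_or_ne n 0 with rfl | hn
    · simp [LSeries.term_zero]
    · rw [LSeries.term_of_ne_zero hn, Complex.cpow_natCast]
      push_cast
      ring
  have hζ : LSeries (fun n => ((ζ n : ℕ) : ℂ)) (k : ℂ)
      = ((∑' n : ℕ, ((n:ℝ) ^ k)⁻¹ : ℝ) : ℂ) := by
    rw [Complex.ofReal_tsum, LSeries]
    refine tsum_congr fun n => ?_
    rcases eq_or_ne n 0 with rfl | hn
    · simp [LSeries.term_zero, zero_pow (by omega : k ≠ 0)]
    · rw [LSeries.term_of_ne_zero hn, Complex.cpow_natCast, zeta_apply, if_neg hn]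
      push_cast
      ring
  have hshift : (∑' n : ℕ, ((n:ℝ) ^ k)⁻¹) = ∑' n : ℕ, (1:ℝ) / ((n:ℝ) + 1) ^ k := by
    rw [Summable.tsum_eq_zero_add (Real.summable_nat_pow_inv.mpr (by omega : 1 < k))]
    simp only [Nat.cast_zero, zero_pow (by omega : k ≠ 0), inv_zero, zero_add]
    refine tsum_congr fun n => ?_
    push_cast
    rw [one_div]
  rw [hμ, hζ, hshift, ← Complex.ofReal_mul] at hmain
  rw [mul_comm]
  exact_mod_cast hmain

lemma indicator_eq {k N n : ℕ} (hk : k ≠ 0) (hn : n ∈ Finset.Icc 1 N) :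
    (if ∀ p : ℕ, p.Prime → ¬ p ^ k ∣ n then (1 : ℝ) else 0)
      = ∑ d ∈ (Finset.Icc 1 N).filter (fun d => d ^ k ∣ n), (μ d : ℝ) := by
  rw [Finset.mem_Icc] at hn
  have hn0 : n ≠ 0 := by omega
  have hfilter : (Finset.Icc 1 N).filter (fun d => d ^ k ∣ n) = (kRad k n).divisors := by
    ext d
    simp only [Finset.mem_filter, Finset.mem_Icc, Nat.mem_divisors]
    constructor
    · rintro ⟨⟨-, -⟩, hd⟩
      exact ⟨(pow_dvd_iff_dvd_kRad hn0 hk d).mp hd, kRad_ne_zero hn0⟩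
    · rintro ⟨hd, -⟩
      have hdk : d ^ k ∣ n := (pow_dvd_iff_dvd_kRad hn0 hk d).mpr hd
      have hd0 : d ≠ 0 := by
        rintro rfl
        rw [zero_pow hk, zero_dvd_iff] at hdk
        exact hn0 hdk
      have hdn : d ∣ n := dvd_trans (dvd_pow_self d hk) hdk
      exact ⟨⟨Nat.one_le_iff_ne_zero.mpr hd0,
        le_trans (Nat.le_of_dvd (Nat.pos_of_ne_zero hn0) hdn) hn.2⟩, hdk⟩
  rw [hfilter, sum_divisors_moebius]
  by_cases h : ∀ p : ℕ, p.Prime → ¬ p ^ k ∣ n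
  · rw [if_pos h, if_pos ((kRad_eq_one_iff hn0 hk).mpr h)]
  · rw [if_neg h, if_neg (fun h1 => h ((kRad_eq_one_iff hn0 hk).mp h1))]

lemma sum_eq_sum_div {k N : ℕ} (hk : k ≠ 0) :
    (∑ n ∈ Finset.Icc 1 N, if ∀ p : ℕ, p.Prime → ¬ p ^ k ∣ n then (1 : ℝ) else 0)
      = ∑ d ∈ Finset.Icc 1 N, (μ d : ℝ) * (N / d ^ k : ℕ) := by
  have h1 : ∀ n ∈ Finset.Icc 1 N,
      (if ∀ p : ℕ, p.Prime → ¬ p ^ k ∣ n then (1 : ℝ) else 0)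
        = ∑ d ∈ Finset.Icc 1 N, (if d ^ k ∣ n then (μ d : ℝ) else 0) := by
    intro n hn
    rw [indicator_eq hk hn, Finset.sum_filter]
  rw [Finset.sum_congr rfl h1, Finset.sum_comm]
  refine Finset.sum_congr rfl fun d _ => ?_
  rw [← Finset.sum_filter, Finset.sum_const, nsmul_eq_mul, mul_comm]
  congr 1
  rw [show Finset.Icc 1 N = Finset.Ioc 0 N from Finset.Icc_add_one_left_eq_Ioc 0 N]
  exact_mod_cast congrArg (Nat.cast : ℕ → ℝ) (Nat.Ioc_filter_dvd_card_eq_div N (d ^ k))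


set_option maxHeartbeats 800000 in
lemma tail_abs {k D : ℕ} (hk : 2 ≤ k) (hD : 1 ≤ D) :
    |∑' (d : ↑((Finset.Icc 1 D : Finset ℕ) : Set ℕ)ᶜ), (μ (d:ℕ) : ℝ) / ((d:ℕ):ℝ) ^ k|
      ≤ ((D:ℝ) ^ (k-1))⁻¹ := by
  have hsub : Summable (fun d : ↑((Finset.Icc 1 D : Finset ℕ) : Set ℕ)ᶜ =>
      (μ (d:ℕ) : ℝ) / ((d:ℕ):ℝ) ^ k) := (summable_f hk).subtype _
  have hsubabs : Summable (fun d : ↑((Finset.Icc 1 D : Finset ℕ) : Set ℕ)ᶜ =>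
      |(μ (d:ℕ) : ℝ) / ((d:ℕ):ℝ) ^ k|) := hsub.abs
  have hsubh : Summable (fun d : ↑((Finset.Icc 1 D : Finset ℕ) : Set ℕ)ᶜ =>
      (if D < (d:ℕ) then (((d:ℕ):ℝ) ^ k)⁻¹ else 0)) := (summable_h hk).subtype _
  have hsubnorm : Summable (fun d : ↑((Finset.Icc 1 D : Finset ℕ) : Set ℕ)ᶜ =>
      ‖(μ (d:ℕ) : ℝ) / ((d:ℕ):ℝ) ^ k‖) := by
    simpa only [Real.norm_eq_abs] using hsubabs
  have h1 := norm_tsum_le_tsum_norm hsubnorm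
  simp only [Real.norm_eq_abs] at h1
  have h2 : ∑' (d : ↑((Finset.Icc 1 D : Finset ℕ) : Set ℕ)ᶜ),
      |(μ (d:ℕ) : ℝ) / ((d:ℕ):ℝ) ^ k|
      ≤ ∑' (d : ↑((Finset.Icc 1 D : Finset ℕ) : Set ℕ)ᶜ),
      (if D < (d:ℕ) then (((d:ℕ):ℝ) ^ k)⁻¹ else 0) := by
    refine Summable.tsum_le_tsum (fun x => ?_) hsubabs hsubh
    have hx : (x:ℕ) ∉ Finset.Icc 1 D := by
      have := x.2
      simpa using this
    rw [Finset.mem_Icc] at hx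
    rcases Nat.lt_or_ge D (x:ℕ) with hlt | hge
    · rw [if_pos hlt]
      have hx0 : 0 < (x:ℕ) := by omega
      have hpos : (0:ℝ) < ((x:ℕ):ℝ) ^ k := by positivity
      rw [abs_div, abs_of_pos hpos, div_le_iff₀ hpos, inv_mul_cancel₀ (ne_of_gt hpos)]
      exact abs_moebius_real_le_one _
    · have hx0 : (x:ℕ) = 0 := by omega
      rw [if_neg (by omega), hx0]
      simp
  have h3 : ∑' (d : ↑((Finset.Icc 1 D : Finset ℕ) : Set ℕ)ᶜ),
      (if D < (d:ℕ) then (((d:ℕ):ℝ) ^ k)⁻¹ else 0) ≤ ((D:ℝ) ^ (k-1))⁻¹ := by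
    have h4 := Summable.sum_add_tsum_compl (s := Finset.Icc 1 D) (summable_h (D := D) hk)
    have h5 : ∑ d ∈ Finset.Icc 1 D, (if D < d then ((d:ℝ) ^ k)⁻¹ else 0) = 0 := by
      refine Finset.sum_eq_zero fun d hd => ?_
      rw [Finset.mem_Icc] at hd
      rw [if_neg (by omega)]
    rw [h5, zero_add] at h4
    rw [h4]
    exact tsum_h_le hk hD
  linarith


end KfreeAux

open Classical

/-- The number of k-free integers up to X equals X/ζ(k) + O(X^{1/k}). -/
theorem stmt_0 (k : ℕ) (hk : 2 ≤ k) :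
    ∃ C : ℝ, 0 < C ∧ ∀ X : ℝ, 1 ≤ X →
      |(∑ n ∈ Finset.Icc 1 ⌊X⌋₊,
          if ∀ p : ℕ, p.Prime → ¬ p ^ k ∣ n then (1 : ℝ) else 0) -
        X / (∑' n : ℕ, (1 : ℝ) / ((n : ℝ) + 1) ^ k)| ≤ C * X ^ ((1 : ℝ) / k) := by
  refine ⟨2 ^ k, by positivity, fun X hX => ?_⟩
  have hk0 : k ≠ 0 := by omega
  have hXpos : (0:ℝ) < X := by linarith
  set Z := ∑' n : ℕ, (1:ℝ) / ((n:ℝ) + 1) ^ k with hZdef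
  set Mv := ∑' d : ℕ, (μ d : ℝ) / (d:ℝ) ^ k with hMdef
  have hMZ : Mv * Z = 1 := KfreeAux.moebius_zeta hk
  have hZ0 : Z ≠ 0 := fun h => by rw [h, mul_zero] at hMZ; exact one_ne_zero hMZ.symm
  have hXZ : X / Z = X * Mv := by
    rw [div_eq_iff hZ0, mul_assoc, hMZ, mul_one]
  set x1 := X ^ ((1:ℝ)/k) with hx1def
  have hkR : (0:ℝ) < (k:ℝ) := by exact_mod_cast (by omega : 0 < k)
  have hx1_one : (1:ℝ) ≤ x1 := by
    rw [hx1def, ← Real.rpow_zero X]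
    exact Real.rpow_le_rpow_of_exponent_le hX (by positivity)
  have hx1pos : (0:ℝ) < x1 := by linarith
  set D := ⌊x1⌋₊ with hDdef
  set N := ⌊X⌋₊ with hNdef
  have hD1 : 1 ≤ D := Nat.le_floor (by exact_mod_cast hx1_one)
  have hDx1 : (D:ℝ) ≤ x1 := Nat.floor_le hx1pos.le
  have hx1D : x1 < (D:ℝ) + 1 := Nat.lt_floor_add_one x1
  have hx1pow : x1 ^ k = X := by
    rw [hx1def, ← Real.rpow_natCast (X ^ ((1:ℝ)/k)) k, ← Real.rpow_mul hXpos.le,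
      one_div, inv_mul_cancel₀ (ne_of_gt hkR), Real.rpow_one]
  have hx1X : x1 ≤ X := by
    calc x1 ≤ X ^ (1:ℝ) := Real.rpow_le_rpow_of_exponent_le hX (by
            rw [div_le_one hkR]; exact_mod_cast (by omega : 1 ≤ k))
      _ = X := Real.rpow_one X
  have hDN : D ≤ N := Nat.floor_le_floor hx1X
  rw [KfreeAux.sum_eq_sum_div hk0]
  have hrestrict : ∑ d ∈ Finset.Icc 1 N, (μ d : ℝ) * ((N / d ^ k : ℕ) : ℝ)
      = ∑ d ∈ Finset.Icc 1 D, (μ d : ℝ) * ((N / d ^ k : ℕ) : ℝ) := by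
    symm
    refine Finset.sum_subset (Finset.Icc_subset_Icc le_rfl hDN) (fun d hd hnd => ?_)
    rw [Finset.mem_Icc] at hd hnd
    have hDd : D + 1 ≤ d := by omega
    have hlt : N < d ^ k := by
      have h1 : x1 < (d:ℝ) := by
        have : ((D:ℕ):ℝ) + 1 ≤ (d:ℝ) := by exact_mod_cast hDd
        linarith
      have h2 : X < (d:ℝ) ^ k := by
        rw [← hx1pow]
        exact pow_lt_pow_left₀ h1 hx1pos.le hk0
      have h3 : ((N:ℕ):ℝ) ≤ X := Nat.floor_le hXpos.le
      have h4 : ((N:ℕ):ℝ) < ((d ^ k : ℕ) : ℝ) := by push_cast; linarith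
      exact_mod_cast h4
    rw [Nat.div_eq_of_lt hlt]
    simp
  rw [hrestrict]
  have hsplit := Summable.sum_add_tsum_compl (s := Finset.Icc 1 D) (KfreeAux.summable_f hk)
  set Tc := ∑' (d : ↑((Finset.Icc 1 D : Finset ℕ) : Set ℕ)ᶜ), (μ (d:ℕ) : ℝ) / ((d:ℕ):ℝ) ^ k
    with hTcdef
  rw [hXZ, hMdef, ← hsplit, mul_add, Finset.mul_sum]
  -- termwise bound
  have hterm : ∀ d ∈ Finset.Icc 1 D,
      |(μ d : ℝ) * ((N / d ^ k : ℕ) : ℝ) - X * ((μ d : ℝ) / (d:ℝ) ^ k)| ≤ 1 := by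
    intro d hd
    rw [Finset.mem_Icc] at hd
    have hd0 : (0:ℝ) < (d:ℝ) ^ k := by
      have : 0 < d := hd.1
      positivity
    have hy : (0:ℝ) ≤ X / (d:ℝ) ^ k := by positivity
    have hNd : ((N / d ^ k : ℕ) : ℝ) = (⌊X / ((d:ℝ) ^ k)⌋₊ : ℝ) := by
      congr 1
      rw [hNdef, ← Nat.floor_div_natCast X (d ^ k)]
      congr 1
      push_cast
      ring
    have hre : X * ((μ d : ℝ) / (d:ℝ) ^ k) = (μ d : ℝ) * (X / (d:ℝ) ^ k) := by ring
    rw [hNd, hre, ← mul_sub, abs_mul]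
    have h1 : |(⌊X / ((d:ℝ) ^ k)⌋₊ : ℝ) - X / (d:ℝ) ^ k| ≤ 1 := by
      rw [abs_le]
      constructor
      · have := Nat.lt_floor_add_one (X / (d:ℝ) ^ k)
        linarith
      · have := Nat.floor_le hy
        linarith
    have h2 := KfreeAux.abs_moebius_real_le_one d
    calc |(μ d : ℝ)| * |(⌊X / ((d:ℝ) ^ k)⌋₊ : ℝ) - X / (d:ℝ) ^ k| ≤ 1 * 1 := by
          exact mul_le_mul h2 h1 (abs_nonneg _) (by norm_num)
      _ = 1 := by norm_num
  -- tail bound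
  have hTcle : |Tc| ≤ (((D:ℝ)) ^ (k-1))⁻¹ := by
    rw [hTcdef]
    exact KfreeAux.tail_abs hk hD1
  -- assemble
  have hXdivx1 : X / x1 ^ (k-1) = x1 := by
    have hxe : x1 ^ (k-1) * x1 = X := by
      rw [← pow_succ, (by omega : k - 1 + 1 = k), hx1pow]
    rw [div_eq_iff (by positivity : x1 ^ (k-1) ≠ 0)]
    linarith [hxe]
  have hDinv : X * (((D:ℝ)) ^ (k-1))⁻¹ ≤ 2 ^ (k-1) * x1 := by
    have hhalf : x1 / 2 ≤ (D:ℝ) := by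
      have : (1:ℝ) ≤ (D:ℝ) := by exact_mod_cast hD1
      linarith
    have hp1 : (x1 / 2) ^ (k-1) ≤ ((D:ℝ)) ^ (k-1) :=
      pow_le_pow_left₀ (by positivity) hhalf _
    have hp2 : (((D:ℝ)) ^ (k-1))⁻¹ ≤ ((x1 / 2) ^ (k-1))⁻¹ :=
      inv_anti₀ (by positivity) hp1
    have hp3 : ((x1 / 2) ^ (k-1))⁻¹ = 2 ^ (k-1) / x1 ^ (k-1) := by
      rw [div_pow, inv_div]
    calc X * (((D:ℝ)) ^ (k-1))⁻¹ ≤ X * (2 ^ (k-1) / x1 ^ (k-1)) := by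
          rw [hp3] at hp2
          exact mul_le_mul_of_nonneg_left hp2 hXpos.le
      _ = 2 ^ (k-1) * (X / x1 ^ (k-1)) := by ring
      _ = 2 ^ (k-1) * x1 := by rw [hXdivx1]
  have habssum : |∑ d ∈ Finset.Icc 1 D, (μ d : ℝ) * ((N / d ^ k : ℕ) : ℝ)
      - ∑ d ∈ Finset.Icc 1 D, X * ((μ d : ℝ) / (d:ℝ) ^ k)| ≤ (D:ℝ) := by
    rw [← Finset.sum_sub_distrib]
    calc |∑ d ∈ Finset.Icc 1 D, ((μ d : ℝ) * ((N / d ^ k : ℕ) : ℝ) - X * ((μ d : ℝ) / (d:ℝ) ^ k))|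
        ≤ ∑ d ∈ Finset.Icc 1 D,
            |(μ d : ℝ) * ((N / d ^ k : ℕ) : ℝ) - X * ((μ d : ℝ) / (d:ℝ) ^ k)| :=
          Finset.abs_sum_le_sum_abs _ _
      _ ≤ ∑ d ∈ Finset.Icc 1 D, (1:ℝ) := Finset.sum_le_sum hterm
      _ = (D:ℝ) := by
          rw [Finset.sum_const, Nat.card_Icc]
          simp
  calc |∑ d ∈ Finset.Icc 1 D, (μ d : ℝ) * ((N / d ^ k : ℕ) : ℝ)
        - (∑ d ∈ Finset.Icc 1 D, X * ((μ d : ℝ) / (d:ℝ) ^ k) + X * Tc)|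
      ≤ |∑ d ∈ Finset.Icc 1 D, (μ d : ℝ) * ((N / d ^ k : ℕ) : ℝ)
        - ∑ d ∈ Finset.Icc 1 D, X * ((μ d : ℝ) / (d:ℝ) ^ k)| + |X * Tc| := by
        rw [sub_add_eq_sub_sub, sub_eq_add_neg _ (X * Tc)]
        refine le_trans (abs_add_le _ _) ?_
        rw [abs_neg]
    _ ≤ (D:ℝ) + X * (((D:ℝ)) ^ (k-1))⁻¹ := by
        have h6 : |X * Tc| = X * |Tc| := by
          rw [abs_mul, abs_of_pos hXpos]
        have h7 : X * |Tc| ≤ X * (((D:ℝ)) ^ (k-1))⁻¹ :=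
          mul_le_mul_of_nonneg_left hTcle hXpos.le
        have := habssum
        rw [h6] at *
        linarith
    _ ≤ x1 + 2 ^ (k-1) * x1 := by linarith
    _ ≤ 2 ^ k * x1 := by
        have h8 : (2:ℝ) ^ k = 2 ^ (k-1) * 2 := by
          rw [← pow_succ, (by omega : k - 1 + 1 = k)]
        have h9 : (1:ℝ) ≤ 2 ^ (k-1) := one_le_pow₀ (by norm_num)
        nlinarith [hx1pos]
end

section
/- For a squarefree integer d coprime to q, with h = (h_1,...,h_j) a tuple of integers, the number of residues n modulo d^k such that d divides ξ(n) := ∏_i σ(n + h_i q) equals U_d := ∏_{p | d} u_p(h), where σ(n) = ∏_{p^k | n} p. -/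
/-- σ(m) = ∏_{p prime, p^k ∣ m} p, with the convention σ(0) = 0. -/
def sig (k : ℕ) (m : ℤ) : ℤ :=
  if m = 0 then 0
  else ∏ p ∈ m.natAbs.primeFactors.filter (fun p : ℕ => ((p : ℕ) : ℤ) ^ k ∣ m), (p : ℤ)

open Finset

lemma sig_dvd_iff {k p : ℕ} (hk : 1 ≤ k) (hp : p.Prime) (m : ℤ) :
    (p : ℤ) ∣ sig k m ↔ ((p : ℕ) : ℤ) ^ k ∣ m := by
  unfold sig
  split_ifs with hm
  · simp [hm]
  constructor
  · intro hdvd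
    have hpz : Prime (p : ℤ) := Nat.prime_iff_prime_int.mp hp
    obtain ⟨l, hl, hdl⟩ := Prime.exists_mem_finset_dvd hpz hdvd
    rw [mem_filter, Nat.mem_primeFactors] at hl
    have : p = l := by
      have := Int.natCast_dvd_natCast.mp (by simpa using hdl)
      exact ((Nat.prime_dvd_prime_iff_eq hp hl.1.1).mp this)
    subst this
    exact hl.2
  · intro hdvd
    have hpk : (p : ℤ) ∣ m := dvd_trans (dvd_pow_self _ (Nat.one_le_iff_ne_zero.mp hk)) hdvd
    have hmem : p ∈ m.natAbs.primeFactors.filter (fun p : ℕ => ((p : ℕ) : ℤ) ^ k ∣ m) := by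
      rw [mem_filter, Nat.mem_primeFactors]
      refine ⟨⟨hp, ?_, Int.natAbs_ne_zero.mpr hm⟩, hdvd⟩
      exact Int.natCast_dvd.mp hpk
    exact dvd_prod_of_mem _ hmem

lemma dvd_prod_sig_iff {k : ℕ} (hk : 1 ≤ k) {d : ℕ} (hd : Squarefree d) {j : ℕ}
    (h : Fin j → ℤ) (n : ℤ) (q : ℕ) :
    ((d : ℤ) ∣ ∏ i, sig k (n + h i * q)) ↔
      ∀ p ∈ d.primeFactors, ∃ i, ((p : ℕ) : ℤ) ^ k ∣ (n + h i * q) := by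
  constructor
  · intro hdvd p hps
    have hp := Nat.prime_of_mem_primeFactors hps
    have hpz : Prime (p : ℤ) := Nat.prime_iff_prime_int.mp hp
    have : (p : ℤ) ∣ ∏ i, sig k (n + h i * q) :=
      dvd_trans (Int.natCast_dvd_natCast.mpr (Nat.dvd_of_mem_primeFactors hps)) hdvd
    obtain ⟨i, _, hi⟩ := Prime.exists_mem_finset_dvd hpz this
    exact ⟨i, (sig_dvd_iff hk hp _).mp hi⟩
  · intro H
    set X := ∏ i, sig k (n + h i * q) with hX
    have hpdvd : ∀ p ∈ d.primeFactors, p ∣ X.natAbs := by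
      intro p hps
      obtain ⟨i, hi⟩ := H p hps
      have : (p : ℤ) ∣ X := dvd_trans
        ((sig_dvd_iff hk (Nat.prime_of_mem_primeFactors hps) _).mpr hi)
        (dvd_prod_of_mem _ (mem_univ i))
      exact Int.natCast_dvd.mp this
    have := Finset.prod_primes_dvd X.natAbs
      (fun p hps => Nat.prime_iff.mp (Nat.prime_of_mem_primeFactors hps)) hpdvd
    rw [Nat.prod_primeFactors_of_squarefree hd] at this
    exact Int.natCast_dvd.mpr this

/-- For squarefree d coprime to q, the number of residues n mod d^k with
d ∣ ξ(n) = ∏_i σ(n + h_i q) equals U_d = ∏_{p ∣ d} u_p(h). -/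
theorem stmt_2 (k j q : ℕ) (hk : 2 ≤ k) (hj : 1 ≤ j) (hq : 0 < q)
    (h : Fin j → ℤ) (d : ℕ) (hd : Squarefree d) (hdq : Nat.Coprime d q) :
    ((Finset.range (d ^ k)).filter
        (fun n : ℕ => (d : ℤ) ∣ ∏ i, sig k ((n : ℤ) + h i * q))).card
      = ∏ p ∈ d.primeFactors,
          (Finset.univ.image fun i => ((h i : ZMod (p ^ k)))).card := by
  classical
  have hk1 : 1 ≤ k := le_trans one_le_two hk
  have hd0 : d ≠ 0 := hd.ne_zero
  haveI : NeZero (d ^ k) := ⟨pow_ne_zero _ hd0⟩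
  set s := d.primeFactors with hs
  let ι := {p // p ∈ s}
  let a : ι → ℕ := fun p => (p : ℕ) ^ k
  have hprime : ∀ i : ι, ((i : ℕ)).Prime := fun i => Nat.prime_of_mem_primeFactors i.2
  have copr : Pairwise (Function.onFun Nat.Coprime a) := by
    intro i i' hii
    exact Nat.Coprime.pow k k ((Nat.coprime_primes (hprime i) (hprime i')).mpr
      (fun hc => hii (Subtype.ext hc)))
  have hprod : ∏ i : ι, a i = d ^ k := by
    calc ∏ i : ι, a i = ∏ p ∈ s, p ^ k := Finset.prod_coe_sort s (fun p => p ^ k)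
      _ = (∏ p ∈ s, p) ^ k := by rw [Finset.prod_pow]
      _ = d ^ k := by rw [hs, Nat.prod_primeFactors_of_squarefree hd]
  let E : ZMod (d ^ k) ≃+* Π i : ι, ZMod (a i) := by
    rw [← hprod]; exact ZMod.prodEquivPi a copr
  have hE : ∀ (n : ℕ) (i : ι), E (n : ZMod (d ^ k)) i = (n : ZMod (a i)) := by
    intro n i
    have := map_natCast ((Pi.evalRingHom (fun i : ι => ZMod (a i)) i).comp
      (E : ZMod (d ^ k) →+* Π i : ι, ZMod (a i))) n
    simpa using this
  let T : ∀ i : ι, Finset (ZMod (a i)) :=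
    fun i => Finset.univ.image fun t : Fin j => ((-(h t * q) : ℤ) : ZMod (a i))
  have hiff : ∀ (n : ℕ) (i : ι) (t : Fin j),
      (((i : ℕ) : ℤ) ^ k ∣ (n : ℤ) + h t * q) ↔
        ((n : ZMod (a i)) = ((-(h t * q) : ℤ) : ZMod (a i))) := by
    intro n i t
    have hcast : ((a i : ℕ) : ℤ) = ((i : ℕ) : ℤ) ^ k := by push_cast [a]; ring
    rw [← hcast]
    rw [show ((n : ZMod (a i))) = (((n : ℤ) : ZMod (a i))) by push_cast; rfl]
    rw [ZMod.intCast_eq_intCast_iff, Int.modEq_iff_dvd,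
      show -(h t * (q : ℤ)) - n = -((n : ℤ) + h t * q) by ring, dvd_neg]
  have hpred : ∀ n : ℕ, ((d : ℤ) ∣ ∏ i, sig k ((n : ℤ) + h i * q)) ↔
      ∀ i : ι, (n : ZMod (a i)) ∈ T i := by
    intro n
    rw [dvd_prod_sig_iff hk1 hd]
    constructor
    · intro H i
      obtain ⟨t, ht⟩ := H i i.2
      simp only [T, mem_image, mem_univ, true_and]
      exact ⟨t, ((hiff n i t).mp ht).symm⟩
    · intro H p hp
      obtain ⟨t, -, ht⟩ := mem_image.mp (H ⟨p, hp⟩)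
      exact ⟨t, (hiff n ⟨p, hp⟩ t).mpr ht.symm⟩
  have hmain : ((Finset.range (d ^ k)).filter
        (fun n : ℕ => (d : ℤ) ∣ ∏ i, sig k ((n : ℤ) + h i * q))).card
      = (Fintype.piFinset T).card := by
    refine Finset.card_bij' (fun n _ => E (n : ZMod (d ^ k))) (fun y _ => (E.symm y).val)
      ?_ ?_ ?_ ?_
    · intro n hn
      rw [mem_filter] at hn
      rw [Fintype.mem_piFinset]
      intro i
      beta_reduce
      rw [hE]
      exact (hpred n).mp hn.2 i
    · intro y hy
      beta_reduce
      rw [mem_filter, Finset.mem_range]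
      refine ⟨ZMod.val_lt _, ?_⟩
      rw [hpred]
      intro i
      have h1 : (((E.symm y).val : ℕ) : ZMod (d ^ k)) = E.symm y :=
        ZMod.natCast_rightInverse _
      have h2 : (((E.symm y).val : ℕ) : ZMod (a i)) = y i := by
        rw [← hE ((E.symm y).val) i, h1, RingEquiv.apply_symm_apply]
      rw [h2]
      exact Fintype.mem_piFinset.mp hy i
    · intro n hn
      beta_reduce
      rw [mem_filter, Finset.mem_range] at hn
      rw [RingEquiv.symm_apply_apply, ZMod.val_cast_of_lt hn.1]
    · intro y hy
      beta_reduce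
      rw [ZMod.natCast_rightInverse (E.symm y), RingEquiv.apply_symm_apply]
  rw [hmain, Fintype.card_piFinset]
  rw [← Finset.prod_coe_sort s (fun p => (Finset.univ.image fun i => ((h i : ZMod (p ^ k)))).card)]
  apply Finset.prod_congr rfl
  intro i _
  -- (T i).card = card of image of h into ZMod ((i:ℕ)^k)
  have hu : IsUnit ((q : ℕ) : ZMod (a i)) := by
    rw [ZMod.isUnit_iff_coprime]
    exact Nat.Coprime.pow_right k
      ((Nat.Coprime.coprime_dvd_left (Nat.dvd_of_mem_primeFactors i.2) hdq).symm)
  set g : ZMod (a i) → ZMod (a i) := fun y => -(y * ((q : ℕ) : ZMod (a i))) with hg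
  have hginj : Function.Injective g := by
    intro y z hyz
    obtain ⟨u, hu'⟩ := hu
    have h2 : y * ((q : ℕ) : ZMod (a i)) = z * ((q : ℕ) : ZMod (a i)) := neg_injective hyz
    rw [← hu'] at h2
    have := congrArg (· * ((u⁻¹ : (ZMod (a i))ˣ) : ZMod (a i))) h2
    simpa [mul_assoc] using this
  have hfun : (fun t : Fin j => ((-(h t * q) : ℤ) : ZMod (a i)))
      = g ∘ (fun t : Fin j => ((h t : ℤ) : ZMod (a i))) := by
    funext t
    simp only [Function.comp_apply, hg]
    push_cast
    ring
  show (T i).card = _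
  simp only [T, hfun, ← Finset.image_image]
  rw [Finset.card_image_of_injective _ hginj]
end

section
/- For every ε > 0, integers k ≥ 2 and j ≥ 1, and any j-tuple h = (h_1,...,h_j) of distinct integers, the number of tuples (n, d_1,...,d_j) with n ≤ x, d_i^k | n + h_i, the d_i pairwise coprime, and d_1·d_2···d_j > y, is O_{ε,j}(x^ε (X y^{−k+1} + X^{2/(k+1)})), where X = max_i (x + h_i). -/
open Finset

private lemma sum_inv_le_log (M : ℕ) (hM : 1 ≤ M) :
    ∑ d ∈ Finset.Icc 1 M, (d:ℝ)⁻¹ ≤ 1 + Real.log M := by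
  induction M, hM using Nat.le_induction with
  | base => simp
  | succ m hm ih =>
    rw [Finset.sum_Icc_succ_top (by omega : 1 ≤ m + 1)]
    have hm0 : (0:ℝ) < m := by exact_mod_cast hm
    have hm1 : (0:ℝ) < (m:ℝ) + 1 := by linarith
    have key := Real.log_le_sub_one_of_pos (show (0:ℝ) < (m:ℝ)/((m:ℝ)+1) by positivity)
    rw [Real.log_div hm0.ne' hm1.ne'] at key
    have heq : (m:ℝ)/((m:ℝ)+1) - 1 = -((m:ℝ)+1)⁻¹ := by field_simp; ring
    have hcast : ((m+1:ℕ):ℝ) = (m:ℝ)+1 := by push_cast; ring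
    rw [hcast]
    linarith

private lemma sum_inv_le_rpow {β : ℝ} (hβ : 0 < β) (M : ℕ) (hM : 1 ≤ M) :
    ∑ d ∈ Finset.Icc 1 M, (d:ℝ)⁻¹ ≤ (1 + 1/β) * (M:ℝ) ^ β := by
  have h1 := sum_inv_le_log M hM
  have hM1 : (1:ℝ) ≤ (M:ℝ) := by exact_mod_cast hM
  have hA : (1:ℝ) ≤ (M:ℝ) ^ β := Real.one_le_rpow hM1 hβ.le
  have hlog : β * Real.log M ≤ (M:ℝ)^β - 1 := by
    have := Real.log_le_sub_one_of_pos (show (0:ℝ) < (M:ℝ)^β by positivity)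
    rwa [Real.log_rpow (by linarith)] at this
  have hlog' : Real.log M ≤ ((M:ℝ)^β - 1)/β := (le_div_iff₀ hβ).mpr (by linarith [hlog])
  have hAβ : (M:ℝ)^β/β = ((M:ℝ)^β-1)/β + 1/β := by ring
  have h1β : 0 < 1/β := by positivity
  calc ∑ d ∈ Finset.Icc 1 M, (d:ℝ)⁻¹ ≤ 1 + Real.log M := h1
    _ ≤ 1 + ((M:ℝ)^β - 1)/β := by linarith
    _ ≤ (1 + 1/β) * (M:ℝ)^β := by
        have hAB : (1 + 1/β) * (M:ℝ)^β = (M:ℝ)^β + (M:ℝ)^β/β := by ring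
        rw [hAB, hAβ]; linarith

private lemma card_divisors_le_rpow {δ : ℝ} (hδ : 0 < δ) :
    ∃ C : ℝ, 1 ≤ C ∧ ∀ m : ℕ, m ≠ 0 → ((m.divisors.card : ℝ)) ≤ C * (m:ℝ) ^ δ := by
  have hlog2 : (0:ℝ) < Real.log 2 := Real.log_pos (by norm_num)
  set C0 : ℝ := 1 + 1/(δ * Real.log 2) with hC0
  have hC01 : (1:ℝ) ≤ C0 := by
    have : (0:ℝ) ≤ 1/(δ * Real.log 2) := by positivity
    simp only [hC0]; linarith
  set K : ℕ := ⌈(2:ℝ) ^ (1/δ)⌉₊ with hK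
  refine ⟨C0 ^ (K+1), by simpa using pow_le_pow_left₀ (by norm_num) hC01 (K+1), ?_⟩
  intro m hm
  have hpoint : ∀ p ∈ m.primeFactors,
      ((m.factorization p + 1 : ℕ):ℝ) ≤ (if p ≤ K then C0 else 1) * ((p:ℝ) ^ (m.factorization p)) ^ δ := by
    intro p hp
    have hpp : p.Prime := Nat.prime_of_mem_primeFactors hp
    set a : ℕ := m.factorization p with ha
    have hp2 : (2:ℝ) ≤ (p:ℝ) := by exact_mod_cast hpp.two_le
    by_cases hpK : p ≤ K
    · rw [if_pos hpK]
      have h2a : (2:ℝ) ^ ((a:ℝ) * δ) ≤ ((p:ℝ) ^ a) ^ δ := by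
        rw [← Real.rpow_natCast (p:ℝ) a, ← Real.rpow_mul (by linarith)]
        exact Real.rpow_le_rpow (by norm_num) hp2 (by positivity)
      have hexp : 1 + (a:ℝ)*δ*Real.log 2 ≤ (2:ℝ) ^ ((a:ℝ)*δ) := by
        rw [Real.rpow_def_of_pos (by norm_num : (0:ℝ) < 2)]
        have := Real.add_one_le_exp (Real.log 2 * ((a:ℝ)*δ))
        nlinarith [this]
      have hexpand : C0 * (1 + (a:ℝ)*δ*Real.log 2) = 1 + (a:ℝ)*δ*Real.log 2 + 1/(δ*Real.log 2) + a := by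
        rw [hC0]; field_simp; ring
      have h1 : (a:ℝ) + 1 ≤ C0 * (1 + (a:ℝ)*δ*Real.log 2) := by
        rw [hexpand]
        have h2 : (0:ℝ) ≤ (a:ℝ)*δ*Real.log 2 := by positivity
        have h3 : (0:ℝ) ≤ 1/(δ*Real.log 2) := by positivity
        linarith
      have h4 : C0 * (1 + (a:ℝ)*δ*Real.log 2) ≤ C0 * (((p:ℝ)^a)^δ) :=
        mul_le_mul_of_nonneg_left (le_trans hexp h2a) (by linarith)
      push_cast
      linarith
    · rw [if_neg hpK, one_mul]
      have hKp : (2:ℝ)^(1/δ) ≤ (p:ℝ) := by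
        have h1 : (K:ℝ) < (p:ℝ) := by exact_mod_cast Nat.lt_of_not_le (by simpa using hpK)
        have h2 : (2:ℝ)^(1/δ) ≤ (K:ℝ) := Nat.le_ceil _
        linarith
      have hp0 : (0:ℝ) ≤ p := by positivity
      have h2p : (2:ℝ) ≤ (p:ℝ)^δ := by
        calc (2:ℝ) = ((2:ℝ)^(1/δ))^δ := by
              rw [← Real.rpow_mul (by norm_num), one_div_mul_cancel hδ.ne', Real.rpow_one]
        _ ≤ (p:ℝ)^δ := Real.rpow_le_rpow (by positivity) hKp hδ.le
      have heq : ((p:ℝ)^a)^δ = ((p:ℝ)^δ)^a := by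
        rw [← Real.rpow_natCast (p:ℝ) a, ← Real.rpow_mul hp0, mul_comm, Real.rpow_mul hp0,
          Real.rpow_natCast]
      rw [heq]
      have h2a : (2:ℝ)^a ≤ ((p:ℝ)^δ)^a := pow_le_pow_left₀ (by norm_num) h2p a
      have haa : ((a:ℝ)+1) ≤ (2:ℝ)^a := by
        have := Nat.lt_two_pow_self (n := a)
        have : (a:ℝ) + 1 ≤ ((2:ℕ)^a : ℕ) := by exact_mod_cast this
        simpa using this
      push_cast
      linarith
  rw [Nat.card_divisors hm]
  have hcast : ((m.primeFactors.prod (m.factorization · + 1) : ℕ) : ℝ)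
      = ∏ p ∈ m.primeFactors, ((m.factorization p + 1 : ℕ) : ℝ) := by push_cast; rfl
  rw [hcast]
  have hstep := Finset.prod_le_prod (s := m.primeFactors)
    (f := fun p => ((m.factorization p + 1 : ℕ) : ℝ))
    (g := fun p => (if p ≤ K then C0 else 1) * ((p:ℝ) ^ (m.factorization p)) ^ δ)
    (fun p _ => by positivity) hpoint
  rw [Finset.prod_mul_distrib] at hstep
  have hw : ∏ p ∈ m.primeFactors, (if p ≤ K then C0 else 1) ≤ C0 ^ (K+1) := by
    rw [Finset.prod_ite, Finset.prod_const, Finset.prod_const, one_pow, mul_one]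
    apply pow_le_pow_right₀ (by linarith)
    calc (m.primeFactors.filter (fun p => p ≤ K)).card
        ≤ (Finset.range (K+1)).card := Finset.card_le_card (by
          intro p hp
          simp only [Finset.mem_filter] at hp
          simp [Finset.mem_range]; omega)
      _ = K + 1 := Finset.card_range _
  have hr : ∏ p ∈ m.primeFactors, ((p:ℝ) ^ (m.factorization p)) ^ δ = (m:ℝ) ^ δ := by
    rw [Real.finset_prod_rpow _ _ (fun p _ => by positivity) δ]
    congr 1
    have h2 : ∏ p ∈ m.primeFactors, p ^ m.factorization p = m := by
      rw [← Nat.support_factorization]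
      exact Nat.factorization_prod_pow_eq_self hm
    calc ∏ p ∈ m.primeFactors, ((p:ℝ) ^ (m.factorization p))
        = ((∏ p ∈ m.primeFactors, p ^ (m.factorization p) : ℕ) : ℝ) := by push_cast; rfl
      _ = (m:ℝ) := by rw [h2]
  calc ∏ p ∈ m.primeFactors, ((m.factorization p + 1 : ℕ) : ℝ)
      ≤ (∏ p ∈ m.primeFactors, (if p ≤ K then C0 else 1)) * ∏ p ∈ m.primeFactors, ((p:ℝ) ^ (m.factorization p)) ^ δ := hstep
    _ ≤ C0 ^ (K+1) * (m:ℝ)^δ := by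
        rw [hr]
        exact mul_le_mul_of_nonneg_right hw (by positivity)
private lemma card_of_residue (s : Finset ℕ) (Q : ℕ) (hQ : 0 < Q) (a L : ℝ) (hL : 0 ≤ L)
    (hmem : ∀ n ∈ s, a < (n:ℝ) ∧ (n:ℝ) ≤ a + L)
    (hdvd : ∀ n ∈ s, ∀ n' ∈ s, (Q:ℤ) ∣ (n:ℤ) - (n':ℤ)) :
    (s.card : ℝ) ≤ 2 * (L / Q) + 1 := by
  have hQR : (0:ℝ) < Q := by exact_mod_cast hQ
  rcases s.eq_empty_or_nonempty with rfl | ⟨n₀, hn₀⟩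
  · simp only [Finset.card_empty, Nat.cast_zero]; positivity
  · set N : ℤ := ⌊L / Q⌋ with hN
    have hN0 : (0:ℤ) ≤ N := Int.floor_nonneg.mpr (by positivity)
    have hQZ : (Q:ℤ) ≠ 0 := by exact_mod_cast hQ.ne'
    have key : ∀ n ∈ s, ∀ t : ℤ, (n:ℤ) - (n₀:ℤ) = (Q:ℤ) * t → -N ≤ t ∧ t ≤ N := by
      intro n hn t ht
      have h1 := hmem n hn; have h0 := hmem n₀ hn₀
      have htr : (n:ℝ) - (n₀:ℝ) = (Q:ℝ) * (t:ℝ) := by exact_mod_cast congrArg (Int.cast : ℤ → ℝ) ht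
      have htle : (t:ℝ) ≤ L / Q := by
        rw [le_div_iff₀ hQR]; nlinarith [h1.2, h0.1]
      have htge : -(L/Q) ≤ (t:ℝ) := by
        rw [neg_le, le_div_iff₀ hQR]; nlinarith [h1.1, h0.2]
      constructor
      · have : -t ≤ N := Int.le_floor.mpr (by push_cast; linarith)
        omega
      · exact Int.le_floor.mpr htle
    have hmaps : ∀ n ∈ s, ((n:ℤ) - (n₀:ℤ))/(Q:ℤ) ∈ Finset.Icc (-N) N := by
      intro n hn
      obtain ⟨t, ht⟩ := hdvd n hn n₀ hn₀
      have hdivt : ((n:ℤ) - (n₀:ℤ))/(Q:ℤ) = t := by rw [ht]; exact Int.mul_ediv_cancel_left _ hQZ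
      rw [hdivt, Finset.mem_Icc]
      exact And.intro (key n hn t ht).1 (key n hn t ht).2
    have hinj : Set.InjOn (fun n : ℕ => ((n:ℤ) - (n₀:ℤ))/(Q:ℤ)) s := by
      intro n hn n' hn' heq
      obtain ⟨t, ht⟩ := hdvd n hn n₀ hn₀
      obtain ⟨t', ht'⟩ := hdvd n' hn' n₀ hn₀
      simp only at heq
      rw [ht, ht', Int.mul_ediv_cancel_left _ hQZ, Int.mul_ediv_cancel_left _ hQZ] at heq
      subst heq
      have : (n:ℤ) = (n':ℤ) := by omega
      exact_mod_cast this
    have hcard := Finset.card_le_card_of_injOn _ hmaps hinj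
    have hIcc : (Finset.Icc (-N) N).card = (2*N+1).toNat := by
      rw [Int.card_Icc]; congr 1; ring
    calc (s.card:ℝ) ≤ (((2*N+1).toNat : ℤ) : ℝ) := by
          rw [hIcc] at hcard; exact_mod_cast hcard
      _ = 2*(N:ℝ)+1 := by rw [Int.toNat_of_nonneg (by omega)]; push_cast; ring
      _ ≤ 2*(L/Q)+1 := by have := Int.floor_le (L/Q); linarith

private lemma exists_mid_subset {ι : Type*} [Fintype ι] [DecidableEq ι] (v : ι → ℕ) (T : ℝ)
    (hT : 1 ≤ T) (hv1 : ∀ i, 1 ≤ v i) (hvB : ∀ i, (v i:ℝ) ≤ T^2)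
    (hbig : T < ∏ i, (v i:ℝ)) :
    ∃ I : Finset ι, T < ∏ i ∈ I, (v i:ℝ) ∧ ∏ i ∈ I, (v i:ℝ) ≤ T^2 := by
  by_cases hone : ∃ i, T < (v i:ℝ)
  · obtain ⟨i, hi⟩ := hone
    exact ⟨{i}, by simpa using hi, by simpa using hvB i⟩
  · push_neg at hone
    set I₀ : Finset ι := Finset.univ.filter (fun i => 2 ≤ v i) with hI₀
    have hprod0 : ∏ i ∈ I₀, (v i:ℝ) = ∏ i, (v i:ℝ) := by
      rw [hI₀]
      apply Finset.prod_filter_of_ne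
      intro i _ hne
      by_contra hlt
      push_neg at hlt
      have : v i = 1 := by have := hv1 i; omega
      exact hne (by rw [this]; norm_num)
    set 𝒮 := I₀.powerset.filter (fun I => T < ∏ i ∈ I, (v i:ℝ)) with hS
    have hSne : 𝒮.Nonempty := ⟨I₀, by
      simp only [hS, Finset.mem_filter, Finset.mem_powerset]
      exact ⟨Finset.Subset.refl _, by rw [hprod0]; exact hbig⟩⟩
    obtain ⟨I, hIS, hImin⟩ := Finset.exists_min_image 𝒮 (fun I => ∏ i ∈ I, (v i:ℝ)) hSne
    simp only [hS, Finset.mem_filter, Finset.mem_powerset] at hIS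
    obtain ⟨hIsub, hIT⟩ := hIS
    have hIne : I.Nonempty := by
      rcases I.eq_empty_or_nonempty with rfl | hne
      · simp only [Finset.prod_empty] at hIT; linarith
      · exact hne
    obtain ⟨i₀, hi₀⟩ := hIne
    have hvi₀ : 2 ≤ v i₀ := by
      have := hIsub hi₀
      simpa [hI₀] using this
    have hsplit : ∏ i ∈ I, (v i:ℝ) = (v i₀:ℝ) * ∏ i ∈ I.erase i₀, (v i:ℝ) :=
      (Finset.mul_prod_erase I _ hi₀).symm
    have hpos : (0:ℝ) < ∏ i ∈ I.erase i₀, (v i:ℝ) :=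
      Finset.prod_pos (fun i _ => by exact_mod_cast hv1 i)
    have herase : ∏ i ∈ I.erase i₀, (v i:ℝ) ≤ T := by
      by_contra hgt
      push_neg at hgt
      have hmem : I.erase i₀ ∈ 𝒮 := by
        simp only [hS, Finset.mem_filter, Finset.mem_powerset]
        exact ⟨(I.erase_subset i₀).trans hIsub, hgt⟩
      have hle := hImin _ hmem
      have h2 : (2:ℝ) ≤ (v i₀:ℝ) := by exact_mod_cast hvi₀
      nlinarith
    refine ⟨I, hIT, ?_⟩
    rw [hsplit]
    have hvT : (v i₀:ℝ) ≤ T := hone i₀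
    nlinarith

set_option maxHeartbeats 1000000 in
/-- Mirsky's lemma: the number of tuples (n, d_1,…,d_j) with n ≤ x, d_i^k ∣ n + h_i,
the d_i pairwise coprime and ∏ d_i > y is O_{ε,j}(x^ε (X y^{1-k} + X^{2/(k+1)})),
where X = max_i (x + h_i). -/
theorem stmt_6 (k j : ℕ) (hk : 2 ≤ k) (hj : 1 ≤ j) (ε : ℝ) (hε : 0 < ε) :
    ∃ C : ℝ, 0 < C ∧ ∀ (x y X : ℝ) (h : Fin j → ℤ),
      1 < x → 1 ≤ y → Function.Injective h → (∀ i, 0 < x + (h i : ℝ)) →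
      IsGreatest (Set.range fun i => x + (h i : ℝ)) X →
      (((Finset.Icc 1 ⌊x⌋₊ ×ˢ Fintype.piFinset fun _ : Fin j => Finset.Icc 1 ⌊X⌋₊).filter
          fun nd => (∀ i, 0 < (nd.1 : ℤ) + h i ∧ ((nd.2 i : ℤ)) ^ k ∣ (nd.1 : ℤ) + h i) ∧
            (∀ i i', i ≠ i' → Nat.Coprime (nd.2 i) (nd.2 i')) ∧
            y < ∏ i, (nd.2 i : ℝ)).card : ℝ)
        ≤ C * x ^ ε * (X * y ^ (1 - (k : ℝ)) + X ^ (2 / ((k : ℝ) + 1))) := by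
  classical
  have hj0 : 0 < j := hj
  have hk0 : k ≠ 0 := by omega
  set m0 : ℝ := min ε 1 with hm0
  have hm0pos : 0 < m0 := lt_min hε one_pos
  have hjR : (0:ℝ) < (j:ℝ) := by exact_mod_cast hj0
  have hkR : (2:ℝ) ≤ (k:ℝ) := by exact_mod_cast hk
  have hk1R : (0:ℝ) < (k:ℝ)+1 := by linarith
  set δ : ℝ := m0 / (2 * (j:ℝ) * ((k:ℝ) + 1)) with hδdef
  have hδ : 0 < δ := by apply div_pos hm0pos; positivity
  obtain ⟨Cδ, hCδ1, htau⟩ := card_divisors_le_rpow hδ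
  have hCδ0 : 0 < Cδ := by linarith
  set C1 : ℝ := 3 * 2^j * ((1 + 1/δ) * Cδ)^j with hC1
  have h1δ : (1:ℝ) ≤ 1 + 1/δ := by
    have : (0:ℝ) ≤ 1/δ := by positivity
    linarith
  have hHC1 : (1:ℝ) ≤ (1 + 1/δ) * Cδ := by nlinarith
  have hC1pos : 0 < C1 := by positivity
  have h2j : (1:ℝ) ≤ 2^j := by simpa using pow_le_pow_left₀ (by norm_num) (by norm_num : (1:ℝ) ≤ 2) j
  have hCδj : (1:ℝ) ≤ Cδ^j := by simpa using pow_le_pow_left₀ (by norm_num) hCδ1 j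
  refine ⟨C1 + Cδ^j, by positivity, ?_⟩
  intro x y X h hx hy hinj hpos hX
  obtain ⟨iX, hiX⟩ := hX.1
  have hXub : ∀ i, x + (h i:ℝ) ≤ X := fun i => hX.2 ⟨i, rfl⟩
  have hX0 : (0:ℝ) < X := hiX ▸ hpos iX
  have hx0 : (0:ℝ) < x := by linarith
  have hx1 : (1:ℝ) ≤ x := hx.le
  have hy0 : (0:ℝ) < y := by linarith
  have hxε : (1:ℝ) ≤ x ^ ε := Real.one_le_rpow hx1 hε.le
  set i₁ : Fin j := ⟨0, hj0⟩ with hi₁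
  set P := Finset.Icc 1 ⌊x⌋₊ ×ˢ Fintype.piFinset fun _ : Fin j => Finset.Icc 1 ⌊X⌋₊ with hP
  set S := P.filter
      (fun nd => (∀ i, 0 < (nd.1 : ℤ) + h i ∧ ((nd.2 i : ℤ)) ^ k ∣ (nd.1 : ℤ) + h i) ∧
        (∀ i i', i ≠ i' → Nat.Coprime (nd.2 i) (nd.2 i')) ∧
        y < ∏ i, (nd.2 i : ℝ)) with hSdef
  have hmemS : ∀ nd ∈ S, ((1 ≤ nd.1 ∧ nd.1 ≤ ⌊x⌋₊) ∧ (∀ i, 1 ≤ nd.2 i ∧ nd.2 i ≤ ⌊X⌋₊)) ∧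
      ((∀ i, 0 < (nd.1 : ℤ) + h i ∧ ((nd.2 i : ℤ)) ^ k ∣ (nd.1 : ℤ) + h i) ∧
        (∀ i i', i ≠ i' → Nat.Coprime (nd.2 i) (nd.2 i')) ∧ y < ∏ i, (nd.2 i : ℝ)) := by
    intro nd hnd
    rw [hSdef, Finset.mem_filter, hP, Finset.mem_product] at hnd
    refine ⟨⟨?_, ?_⟩, hnd.2⟩
    · exact Finset.mem_Icc.mp hnd.1.1
    · intro i; exact Finset.mem_Icc.mp (Fintype.mem_piFinset.mp hnd.1.2 i)
  have hwin : ∀ n : ℕ, n ≤ ⌊x⌋₊ → ∀ i, (n:ℝ) + (h i:ℝ) ≤ X := by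
    intro n hn i
    have h1 : (n:ℝ) ≤ (⌊x⌋₊:ℝ) := by exact_mod_cast hn
    have h2 : ((⌊x⌋₊:ℕ):ℝ) ≤ x := Nat.floor_le hx0.le
    linarith [hXub i]
  have hdk : ∀ nd ∈ S, ∀ i, ((nd.2 i:ℝ))^k ≤ X := by
    intro nd hnd i
    obtain ⟨⟨hn, hd⟩, hcond⟩ := hmemS nd hnd
    have h3 : ((nd.2 i:ℤ))^k ≤ (nd.1:ℤ) + h i := Int.le_of_dvd (hcond.1 i).1 (hcond.1 i).2
    have h5 : ((nd.1:ℝ)) + (h i:ℝ) ≤ X := hwin nd.1 hn.2 i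
    have h4 : ((nd.2 i:ℝ))^k ≤ (nd.1:ℝ) + (h i:ℝ) := by exact_mod_cast h3
    linarith
  by_cases hX1 : 1 ≤ X
  swap
  · have hS0 : S = ∅ := by
      rw [Finset.eq_empty_iff_forall_notMem]
      intro nd hnd
      have h1 := hdk nd hnd i₁
      have h2 := ((hmemS nd hnd).1.2 i₁).1
      have h2' : (1:ℝ) ≤ (nd.2 i₁:ℝ) := by exact_mod_cast h2
      have h3 : (1:ℝ) ≤ ((nd.2 i₁:ℝ))^k := by simpa using pow_le_pow_left₀ (by norm_num) h2' k
      linarith [not_le.mp hX1]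
    rw [hS0]
    simp only [Finset.card_empty, Nat.cast_zero]
    positivity
  · have hM1 : 1 ≤ ⌊X⌋₊ := Nat.le_floor (by exact_mod_cast hX1)
    have hMX : ((⌊X⌋₊:ℕ):ℝ) ≤ X := Nat.floor_le hX0.le
    have hXδ1 : (1:ℝ) ≤ X ^ δ := Real.one_le_rpow hX1 hδ.le
    have hCX1 : (1:ℝ) ≤ Cδ * X^δ := by nlinarith
    set T : ℝ := X ^ (1/((k:ℝ)+1)) with hTdef
    have hT1 : 1 ≤ T := Real.one_le_rpow hX1 (by positivity)
    have hT0 : 0 < T := by linarith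
    have hTk1 : T^(k+1) = X := by
      rw [hTdef, ← Real.rpow_natCast (X ^ (1/((k:ℝ)+1))) (k+1), ← Real.rpow_mul hX0.le]
      rw [show (1/((k:ℝ)+1)) * ((k+1:ℕ):ℝ) = 1 by push_cast; field_simp]
      exact Real.rpow_one X
    have hT2 : T^2 = X^(2/((k:ℝ)+1)) := by
      rw [hTdef, ← Real.rpow_natCast (X ^ (1/((k:ℝ)+1))) 2, ← Real.rpow_mul hX0.le]
      congr 1
      push_cast
      ring
    set H : ℝ := ∑ d ∈ Finset.Icc 1 ⌊X⌋₊, (d:ℝ)⁻¹ with hHdef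
    have hH1 : 1 ≤ H := by
      rw [hHdef]
      have h1 : ((1:ℕ):ℝ)⁻¹ ≤ ∑ d ∈ Finset.Icc 1 ⌊X⌋₊, (d:ℝ)⁻¹ :=
        Finset.single_le_sum (f := fun d : ℕ => (d:ℝ)⁻¹) (fun i _ => by positivity)
          (Finset.mem_Icc.mpr ⟨le_refl 1, hM1⟩)
      simpa using h1
    have hH0 : 0 < H := by linarith
    have hHb : H ≤ (1 + 1/δ) * X^δ := by
      calc H ≤ (1 + 1/δ) * ((⌊X⌋₊:ℕ):ℝ)^δ := sum_inv_le_rpow hδ _ hM1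
        _ ≤ (1 + 1/δ) * X^δ :=
            mul_le_mul_of_nonneg_left (Real.rpow_le_rpow (by positivity) hMX hδ.le) (by positivity)
    have hD : ∀ z : ℤ, 0 < z → (z:ℝ) ≤ X →
        ((((Finset.Icc 1 ⌊X⌋₊).filter (fun d : ℕ => ((d:ℤ))^k ∣ z)).card : ℝ)) ≤ Cδ * X^δ := by
      intro z hz hzX
      have hz0 : z.toNat ≠ 0 := by omega
      have hsub : (Finset.Icc 1 ⌊X⌋₊).filter (fun d : ℕ => ((d:ℤ))^k ∣ z) ⊆ z.toNat.divisors := by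
        intro d hd
        simp only [Finset.mem_filter, Finset.mem_Icc] at hd
        rw [Nat.mem_divisors]
        refine ⟨?_, hz0⟩
        have h1 : (d:ℤ) ∣ z := dvd_trans (dvd_pow_self (d:ℤ) hk0) hd.2
        have h2 : (d:ℤ) ∣ (z.toNat:ℤ) := by rwa [Int.toNat_of_nonneg hz.le]
        exact_mod_cast h2
      have h1 := Finset.card_le_card hsub
      have h2 := htau z.toNat hz0
      have h3 : ((z.toNat:ℕ):ℝ) ≤ X := by
        rw [show ((z.toNat:ℕ):ℝ) = ((z.toNat:ℤ):ℝ) by push_cast; rfl, Int.toNat_of_nonneg hz.le]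
        exact hzX
      calc (((Finset.Icc 1 ⌊X⌋₊).filter (fun d : ℕ => ((d:ℤ))^k ∣ z)).card : ℝ)
          ≤ (z.toNat.divisors.card : ℝ) := by exact_mod_cast h1
        _ ≤ Cδ * ((z.toNat:ℕ):ℝ)^δ := h2
        _ ≤ Cδ * X^δ :=
            mul_le_mul_of_nonneg_left (Real.rpow_le_rpow (by positivity) h3 hδ.le) (by linarith)
    have hF : ∀ (n : ℕ) (I : Finset (Fin j)) (e : Fin j → ℕ),
        (((S.filter (fun nd => nd.1 = n ∧ ∀ i ∈ I, nd.2 i = e i)).card : ℝ)) ≤ (Cδ * X^δ)^j := by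
      intro n I e
      rcases (S.filter (fun nd => nd.1 = n ∧ ∀ i ∈ I, nd.2 i = e i)).eq_empty_or_nonempty with
        h0 | ⟨nd₀, hnd₀⟩
      · rw [h0]; simp only [Finset.card_empty, Nat.cast_zero]; positivity
      · have hnd₀S : nd₀ ∈ S := (Finset.mem_filter.mp hnd₀).1
        have hn₀ : nd₀.1 = n := (Finset.mem_filter.mp hnd₀).2.1
        have hw := hmemS nd₀ hnd₀S
        have hnx : n ≤ ⌊x⌋₊ := hn₀ ▸ hw.1.1.2
        have hpos' : ∀ i, 0 < (n:ℤ) + h i := fun i => hn₀ ▸ (hw.2.1 i).1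
        set Z : Fin j → Finset ℕ := fun i => if i ∈ I then {e i}
          else (Finset.Icc 1 ⌊X⌋₊).filter (fun d : ℕ => ((d:ℤ))^k ∣ (n:ℤ) + h i) with hZ
        have hsub : ∀ nd ∈ S.filter (fun nd => nd.1 = n ∧ ∀ i ∈ I, nd.2 i = e i),
            nd.2 ∈ Fintype.piFinset Z := by
          intro nd hnd
          obtain ⟨hndS, hnd1, hnd2⟩ := Finset.mem_filter.mp hnd
          rw [Fintype.mem_piFinset]
          intro i
          by_cases hiI : i ∈ I
          · simp only [hZ, if_pos hiI, Finset.mem_singleton]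
            exact hnd2 i hiI
          · simp only [hZ, if_neg hiI, Finset.mem_filter, Finset.mem_Icc]
            have hm := hmemS nd hndS
            refine ⟨hm.1.2 i, ?_⟩
            have h1 := (hm.2.1 i).2
            rwa [hnd1] at h1
        have hinj2 : Set.InjOn Prod.snd
            (↑(S.filter (fun nd => nd.1 = n ∧ ∀ i ∈ I, nd.2 i = e i)) :
              Set (ℕ × (Fin j → ℕ))) := by
          intro a ha b hb hab
          have ha1 : a.1 = n := (Finset.mem_filter.mp ha).2.1
          have hb1 : b.1 = n := (Finset.mem_filter.mp hb).2.1
          exact Prod.ext (ha1.trans hb1.symm) hab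
        have hcard := Finset.card_le_card_of_injOn Prod.snd hsub hinj2
        have hZb : ∀ i, ((Z i).card : ℝ) ≤ Cδ * X^δ := by
          intro i
          by_cases hiI : i ∈ I
          · simp only [hZ, if_pos hiI, Finset.card_singleton, Nat.cast_one]
            exact hCX1
          · simp only [hZ, if_neg hiI]
            apply hD _ (hpos' i)
            have h5 := hwin n hnx i
            push_cast
            linarith
        calc ((S.filter (fun nd => nd.1 = n ∧ ∀ i ∈ I, nd.2 i = e i)).card : ℝ)
            ≤ ((Fintype.piFinset Z).card : ℝ) := by exact_mod_cast hcard
          _ = ∏ i, ((Z i).card : ℝ) := by rw [Fintype.card_piFinset]; push_cast; rfl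
          _ ≤ ∏ _i : Fin j, (Cδ * X^δ) :=
              Finset.prod_le_prod (fun i _ => by positivity) (fun i _ => hZb i)
          _ = (Cδ * X^δ)^j := by rw [Finset.prod_const, Finset.card_univ, Fintype.card_fin]
    have hN : ∀ (I : Finset (Fin j)) (i₀ : Fin j), i₀ ∈ I → ∀ e : Fin j → ℕ,
        (∀ i ∈ I, 1 ≤ e i) →
        ((↑I : Set (Fin j)).Pairwise fun i i' => Nat.Coprime (e i) (e i')) →
        ((((Finset.Icc 1 ⌊x⌋₊).filter
            (fun n : ℕ => ∀ i ∈ I, 0 < (n:ℤ) + h i ∧ ((e i:ℤ))^k ∣ (n:ℤ) + h i)).card : ℝ))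
          ≤ 2 * (X / ∏ i ∈ I, ((e i:ℝ))^k) + 1 := by
      intro I i₀ hi₀ e he1 hcop
      set Q : ℕ := ∏ i ∈ I, (e i)^k with hQdef
      have hQpos : 0 < Q := Finset.prod_pos (fun i hi => pow_pos (he1 i hi) k)
      have hQcast : ((Q:ℕ):ℝ) = ∏ i ∈ I, ((e i:ℝ))^k := by rw [hQdef]; push_cast; rfl
      have hmem0 : ∀ n ∈ (Finset.Icc 1 ⌊x⌋₊).filter
          (fun n : ℕ => ∀ i ∈ I, 0 < (n:ℤ) + h i ∧ ((e i:ℤ))^k ∣ (n:ℤ) + h i),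
          (-(h i₀:ℝ)) < (n:ℝ) ∧ (n:ℝ) ≤ (-(h i₀:ℝ)) + X := by
        intro n hn
        simp only [Finset.mem_filter, Finset.mem_Icc] at hn
        obtain ⟨⟨hn1, hn2⟩, hcond⟩ := hn
        constructor
        · have h1 := (hcond i₀ hi₀).1
          have h2 : (0:ℝ) < (n:ℝ) + (h i₀:ℝ) := by exact_mod_cast h1
          linarith
        · have h3 := hwin n hn2 i₀
          linarith
      have hdvd0 : ∀ n ∈ (Finset.Icc 1 ⌊x⌋₊).filter
          (fun n : ℕ => ∀ i ∈ I, 0 < (n:ℤ) + h i ∧ ((e i:ℤ))^k ∣ (n:ℤ) + h i),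
          ∀ n' ∈ (Finset.Icc 1 ⌊x⌋₊).filter
          (fun n : ℕ => ∀ i ∈ I, 0 < (n:ℤ) + h i ∧ ((e i:ℤ))^k ∣ (n:ℤ) + h i),
          (Q:ℤ) ∣ (n:ℤ) - (n':ℤ) := by
        intro n hn n' hn'
        simp only [Finset.mem_filter, Finset.mem_Icc] at hn hn'
        have hdvd : ∀ i ∈ I, ((e i:ℤ))^k ∣ (n:ℤ) - (n':ℤ) := by
          intro i hi
          have h1 := (hn.2 i hi).2
          have h2 := (hn'.2 i hi).2
          have h3 := dvd_sub h1 h2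
          simpa using h3
        have hpair : (↑I : Set (Fin j)).Pairwise (Function.onFun IsCoprime fun i => ((e i:ℤ))^k) := by
          intro i hi i' hi' hne
          exact (Nat.isCoprime_iff_coprime.mpr (hcop hi hi' hne)).pow
        have h4 := Finset.prod_dvd_of_coprime hpair hdvd
        have hQeq : ((Q:ℤ)) = ∏ i ∈ I, ((e i:ℤ))^k := by rw [hQdef]; push_cast; rfl
        rwa [hQeq]
      have hres := card_of_residue _ Q hQpos (-(h i₀:ℝ)) X hX0.le hmem0 hdvd0
      rwa [hQcast] at hres
    -- split into A and B parts
    set QA : (ℕ × (Fin j → ℕ)) → ℝ := fun nd => ∏ i, ((nd.2 i:ℝ))^k with hQA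
    have hsplit : (S.card : ℝ) = ((S.filter (fun nd => QA nd ≤ X)).card : ℝ)
        + ((S.filter (fun nd => ¬ QA nd ≤ X)).card : ℝ) := by
      rw [← Nat.cast_add, Finset.card_filter_add_card_filter_not]
    have hAb : ((S.filter (fun nd => QA nd ≤ X)).card : ℝ) ≤ 3 * (X * y^(1-(k:ℝ))) * H^j := by
      set A := S.filter (fun nd => QA nd ≤ X) with hA
      have hmaps : ∀ nd ∈ A, nd.2 ∈ Fintype.piFinset (fun _ : Fin j => Finset.Icc 1 ⌊X⌋₊) := by
        intro nd hnd
        have hndS : nd ∈ S := (Finset.mem_filter.mp hnd).1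
        rw [Fintype.mem_piFinset]
        intro i
        exact Finset.mem_Icc.mpr ((hmemS _ hndS).1.2 i)
      have hfib := Finset.card_eq_sum_card_fiberwise hmaps
      have hper : ∀ e ∈ Fintype.piFinset (fun _ : Fin j => Finset.Icc 1 ⌊X⌋₊),
          ((A.filter (fun nd => nd.2 = e)).card : ℝ)
            ≤ (3 * (X * y^(1-(k:ℝ)))) * ∏ i, ((e i:ℝ))⁻¹ := by
        intro e _
        rcases (A.filter (fun nd => nd.2 = e)).eq_empty_or_nonempty with h0 | ⟨nd₀, hnd₀⟩
        · rw [h0]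
          simp only [Finset.card_empty, Nat.cast_zero]
          have hy1 : (0:ℝ) ≤ y^(1-(k:ℝ)) := by positivity
          have hprodnn : (0:ℝ) ≤ ∏ i, ((e i:ℝ))⁻¹ :=
            Finset.prod_nonneg (fun i _ => by positivity)
          positivity
        · have hnd₀A : nd₀ ∈ A := (Finset.mem_filter.mp hnd₀).1
          have hnd₀S : nd₀ ∈ S := (Finset.mem_filter.mp hnd₀A).1
          have he2 : nd₀.2 = e := (Finset.mem_filter.mp hnd₀).2
          have hw := hmemS nd₀ hnd₀S
          have he1 : ∀ i, 1 ≤ e i := by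
            intro i
            have h1 := (hw.1.2 i).1
            rwa [he2] at h1
          have hyu : y < ∏ i, ((e i:ℝ)) := by
            have h1 := hw.2.2.2
            rwa [he2] at h1
          have hcop : ∀ i i', i ≠ i' → Nat.Coprime (e i) (e i') := by
            intro i i' hne
            have h1 := hw.2.2.1 i i' hne
            rwa [he2] at h1
          have hQX : (∏ i, ((e i:ℝ))^k) ≤ X := by
            have h1 := (Finset.mem_filter.mp hnd₀A).2
            simp only [hQA] at h1
            rwa [he2] at h1
          have hsub : ∀ nd ∈ A.filter (fun nd => nd.2 = e), nd.1 ∈ (Finset.Icc 1 ⌊x⌋₊).filter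
              (fun n : ℕ => ∀ i ∈ (Finset.univ : Finset (Fin j)),
                0 < (n:ℤ) + h i ∧ ((e i:ℤ))^k ∣ (n:ℤ) + h i) := by
            intro nd hnd
            have hndA : nd ∈ A := (Finset.mem_filter.mp hnd).1
            have hndS : nd ∈ S := (Finset.mem_filter.mp hndA).1
            have hnde : nd.2 = e := (Finset.mem_filter.mp hnd).2
            have hm := hmemS nd hndS
            rw [Finset.mem_filter]
            refine ⟨Finset.mem_Icc.mpr hm.1.1, ?_⟩
            intro i _
            have h1 := hm.2.1 i
            rwa [hnde] at h1
          have hinj2 : Set.InjOn Prod.fst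
              (↑(A.filter (fun nd => nd.2 = e)) : Set (ℕ × (Fin j → ℕ))) := by
            intro a ha b hb hab
            have ha1 : a.2 = e := (Finset.mem_filter.mp ha).2
            have hb1 : b.2 = e := (Finset.mem_filter.mp hb).2
            exact Prod.ext hab (ha1.trans hb1.symm)
          have hcard2 := Finset.card_le_card_of_injOn Prod.fst hsub hinj2
          have hNb := hN Finset.univ i₁ (Finset.mem_univ _) e (fun i _ => he1 i)
            (fun i _ i' _ hne => hcop i i' hne)
          set u : ℝ := ∏ i, ((e i:ℝ)) with hu
          have hu1 : (1:ℝ) ≤ u := by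
            rw [hu]
            calc (1:ℝ) = ∏ _i : Fin j, (1:ℝ) := by rw [Finset.prod_const, one_pow]
              _ ≤ ∏ i, ((e i:ℝ)) := Finset.prod_le_prod (fun i _ => by norm_num)
                  (fun i _ => by exact_mod_cast he1 i)
          have hu0 : (0:ℝ) < u := by linarith only [hu1]
          have huk : ∏ i, ((e i:ℝ))^k = u^k := by rw [hu, ← Finset.prod_pow]
          have hXu : (1:ℝ) ≤ X / u^k := by
            rw [le_div_iff₀ (by positivity)]
            rw [huk] at hQX
            linarith only [hQX]
          have hyk : y^(1-(k:ℝ)) = (y^(k-1))⁻¹ := by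
            rw [← Real.rpow_natCast y (k-1), ← Real.rpow_neg hy0.le]
            congr 1
            push_cast [Nat.cast_sub (by omega : 1 ≤ k)]
            ring
          have hukk : y^(k-1) * u ≤ u^k := by
            have h1 : y^(k-1) ≤ u^(k-1) := pow_le_pow_left₀ hy0.le (le_of_lt hyu) (k-1)
            have h2 : u^(k-1) * u = u^k := by
              rw [← pow_succ]
              congr 1
              omega
            calc y^(k-1) * u ≤ u^(k-1) * u := mul_le_mul_of_nonneg_right h1 (by positivity)
              _ = u^k := h2
          have h3 : X / u^k ≤ X / (y^(k-1) * u) :=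
            div_le_div_of_nonneg_left hX0.le (by positivity) hukk
          have h4 : X / (y^(k-1) * u) = (X * y^(1-(k:ℝ))) * u⁻¹ := by
            rw [hyk]
            field_simp
          have h5 : (1:ℝ) ≤ (X * y^(1-(k:ℝ))) * u⁻¹ := by
            rw [← h4]
            linarith only [hXu, h3]
          have h6 : X / u^k ≤ (X * y^(1-(k:ℝ))) * u⁻¹ := by rw [← h4]; exact h3
          calc ((A.filter (fun nd => nd.2 = e)).card : ℝ)
              ≤ (((Finset.Icc 1 ⌊x⌋₊).filter
                (fun n : ℕ => ∀ i ∈ (Finset.univ : Finset (Fin j)),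
                  0 < (n:ℤ) + h i ∧ ((e i:ℤ))^k ∣ (n:ℤ) + h i)).card : ℝ) := by
                exact_mod_cast hcard2
            _ ≤ 2 * (X / ∏ i ∈ Finset.univ, ((e i:ℝ))^k) + 1 := hNb
            _ = 2 * (X / u^k) + 1 := by rw [huk]
            _ ≤ 3 * ((X * y^(1-(k:ℝ))) * u⁻¹) := by linarith only [h5, h6]
            _ = (3 * (X * y^(1-(k:ℝ)))) * ∏ i, ((e i:ℝ))⁻¹ := by
                rw [Finset.prod_inv_distrib, ← hu]
                ring
      calc ((S.filter (fun nd => QA nd ≤ X)).card : ℝ)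
          = ∑ e ∈ Fintype.piFinset (fun _ : Fin j => Finset.Icc 1 ⌊X⌋₊),
            ((A.filter (fun nd => nd.2 = e)).card : ℝ) := by
            rw [← hA, hfib]
            push_cast
            rfl
        _ ≤ ∑ e ∈ Fintype.piFinset (fun _ : Fin j => Finset.Icc 1 ⌊X⌋₊),
            (3 * (X * y^(1-(k:ℝ)))) * ∏ i, ((e i:ℝ))⁻¹ := Finset.sum_le_sum hper
        _ = (3 * (X * y^(1-(k:ℝ)))) * ∑ e ∈ Fintype.piFinset (fun _ : Fin j => Finset.Icc 1 ⌊X⌋₊),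
            ∏ i, ((e i:ℝ))⁻¹ := by rw [← Finset.mul_sum]
        _ = (3 * (X * y^(1-(k:ℝ)))) * H^j := by
            have hps : ∑ e ∈ Fintype.piFinset (fun _ : Fin j => Finset.Icc 1 ⌊X⌋₊),
                ∏ i, ((e i:ℝ))⁻¹ = ∏ _i : Fin j, H :=
              (Finset.prod_univ_sum (fun _ : Fin j => Finset.Icc 1 ⌊X⌋₊)
                (fun _ d => (d:ℝ)⁻¹)).symm
            rw [hps, Finset.prod_const, Finset.card_univ, Fintype.card_fin]
        _ = 3 * (X * y^(1-(k:ℝ))) * H^j := by ring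
    have hBb : ((S.filter (fun nd => ¬ QA nd ≤ X)).card : ℝ)
        ≤ (2:ℝ)^j * (3 * T^2 * ((Cδ * X^δ)^j * H^j)) := by
      set B := S.filter (fun nd => ¬ QA nd ≤ X) with hB
      have hchoice : ∀ nd ∈ B, ∃ I : Finset (Fin j),
          T < ∏ i ∈ I, ((nd.2 i:ℝ)) ∧ ∏ i ∈ I, ((nd.2 i:ℝ)) ≤ T^2 := by
        intro nd hnd
        have hndS : nd ∈ S := (Finset.mem_filter.mp hnd).1
        have hm := hmemS nd hndS
        have hQX : X < ∏ i, ((nd.2 i:ℝ))^k := by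
          have h1 := (Finset.mem_filter.mp hnd).2
          simp only [hQA, not_le] at h1
          exact h1
        apply exists_mid_subset (v := nd.2) T hT1 (fun i => (hm.1.2 i).1)
        · intro i
          have h1 : ((nd.2 i:ℝ))^k ≤ X := hdk nd hndS i
          have h2 : T^(k+1) ≤ (T^2)^k := by
            rw [← pow_mul]
            exact pow_le_pow_right₀ hT1 (by omega)
          have h3 : ((nd.2 i:ℝ))^k ≤ (T^2)^k := by
            rw [← hTk1] at h1
            linarith only [h1, h2]
          exact le_of_pow_le_pow_left₀ hk0 (by positivity) h3
        · have hu1 : (1:ℝ) ≤ ∏ i, ((nd.2 i:ℝ)) := by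
            calc (1:ℝ) = ∏ _i : Fin j, (1:ℝ) := by rw [Finset.prod_const, one_pow]
              _ ≤ ∏ i, ((nd.2 i:ℝ)) := Finset.prod_le_prod (fun i _ => by norm_num)
                  (fun i _ => by exact_mod_cast (hm.1.2 i).1)
          have h5 : T^(k+1) < (∏ i, ((nd.2 i:ℝ)))^(k+1) := by
            rw [hTk1]
            calc X < ∏ i, ((nd.2 i:ℝ))^k := hQX
              _ = (∏ i, ((nd.2 i:ℝ)))^k := by rw [Finset.prod_pow]
              _ ≤ (∏ i, ((nd.2 i:ℝ)))^(k+1) := pow_le_pow_right₀ hu1 (by omega)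
          exact lt_of_pow_lt_pow_left₀ (k+1) (by positivity) h5
      have hBsub : B ⊆ (Finset.univ : Finset (Fin j)).powerset.biUnion
          (fun I => B.filter (fun nd => T < ∏ i ∈ I, ((nd.2 i:ℝ)) ∧ ∏ i ∈ I, ((nd.2 i:ℝ)) ≤ T^2)) := by
        intro nd hnd
        obtain ⟨I, h1, h2⟩ := hchoice nd hnd
        exact Finset.mem_biUnion.mpr ⟨I, Finset.mem_powerset.mpr (Finset.subset_univ I),
          Finset.mem_filter.mpr ⟨hnd, h1, h2⟩⟩
      have hBI : ∀ I : Finset (Fin j),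
          (((B.filter (fun nd => T < ∏ i ∈ I, ((nd.2 i:ℝ)) ∧ ∏ i ∈ I, ((nd.2 i:ℝ)) ≤ T^2)).card : ℝ))
            ≤ 3 * T^2 * ((Cδ * X^δ)^j * H^j) := by
        intro I
        set BI := B.filter (fun nd => T < ∏ i ∈ I, ((nd.2 i:ℝ)) ∧ ∏ i ∈ I, ((nd.2 i:ℝ)) ≤ T^2)
          with hBIdef
        set FI : (ℕ × (Fin j → ℕ)) → (Fin j → ℕ) :=
          fun nd => fun i => if i ∈ I then nd.2 i else 1 with hFI
        set EI := Fintype.piFinset (fun i => if i ∈ I then Finset.Icc 1 ⌊X⌋₊ else {1}) with hEI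
        have hmapsB : ∀ nd ∈ BI, FI nd ∈ EI := by
          intro nd hnd
          have hndS : nd ∈ S := (Finset.mem_filter.mp ((Finset.mem_filter.mp hnd).1)).1
          have hm := hmemS nd hndS
          rw [hEI, Fintype.mem_piFinset]
          intro i
          by_cases hiI : i ∈ I
          · simp only [hFI, if_pos hiI]
            exact Finset.mem_Icc.mpr (hm.1.2 i)
          · simp only [hFI, if_neg hiI]
            exact Finset.mem_singleton_self 1
        have hfibB := Finset.card_eq_sum_card_fiberwise hmapsB
        have hperB : ∀ e ∈ EI, ((BI.filter (fun nd => FI nd = e)).card : ℝ)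
            ≤ ((Cδ * X^δ)^j * (3 * T^2)) * ∏ i, ((e i:ℝ))⁻¹ := by
          intro e _
          rcases (BI.filter (fun nd => FI nd = e)).eq_empty_or_nonempty with h0 | ⟨nd₀, hnd₀⟩
          · rw [h0]
            simp only [Finset.card_empty, Nat.cast_zero]
            have hprodnn : (0:ℝ) ≤ ∏ i, ((e i:ℝ))⁻¹ :=
              Finset.prod_nonneg (fun i _ => by positivity)
            positivity
          · have hnd₀BI : nd₀ ∈ BI := (Finset.mem_filter.mp hnd₀).1
            have hnd₀B : nd₀ ∈ B := (Finset.mem_filter.mp hnd₀BI).1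
            have hnd₀S : nd₀ ∈ S := (Finset.mem_filter.mp hnd₀B).1
            have hFIe : FI nd₀ = e := (Finset.mem_filter.mp hnd₀).2
            have hm₀ := hmemS nd₀ hnd₀S
            have heI : ∀ i ∈ I, e i = nd₀.2 i := by
              intro i hi
              rw [← hFIe]
              simp only [hFI, if_pos hi]
            have heI' : ∀ i, i ∉ I → e i = 1 := by
              intro i hi
              rw [← hFIe]
              simp only [hFI, if_neg hi]
            have he1 : ∀ i, 1 ≤ e i := by
              intro i
              by_cases hiI : i ∈ I
              · rw [heI i hiI]; exact (hm₀.1.2 i).1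
              · rw [heI' i hiI]
            have hprodIe : ∏ i ∈ I, ((e i:ℝ)) = ∏ i ∈ I, ((nd₀.2 i:ℝ)) :=
              Finset.prod_congr rfl (fun i hi => by rw [heI i hi])
            have hcondI := (Finset.mem_filter.mp hnd₀BI).2
            set u : ℝ := ∏ i ∈ I, ((e i:ℝ)) with hu
            have hTu : T < u := by rw [hprodIe]; exact hcondI.1
            have huT2 : u ≤ T^2 := by rw [hprodIe]; exact hcondI.2
            have hu0 : (0:ℝ) < u := by linarith only [hTu, hT0]
            have huniv : u = ∏ i, ((e i:ℝ)) := by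
              rw [hu]
              exact Finset.prod_subset (Finset.subset_univ I)
                (fun i _ hiI => by rw [heI' i hiI]; norm_num)
            have hIne : I.Nonempty := by
              rcases I.eq_empty_or_nonempty with rfl | hne
              · rw [hu, Finset.prod_empty] at hTu
                linarith only [hTu, hT1]
              · exact hne
            obtain ⟨i₀, hi₀⟩ := hIne
            set NS := (Finset.Icc 1 ⌊x⌋₊).filter
              (fun n : ℕ => ∀ i ∈ I, 0 < (n:ℤ) + h i ∧ ((e i:ℤ))^k ∣ (n:ℤ) + h i) with hNSdef
            have hmapsn : ∀ nd ∈ BI.filter (fun nd => FI nd = e), nd.1 ∈ Finset.Icc 1 ⌊x⌋₊ := by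
              intro nd hnd
              have hndS : nd ∈ S :=
                (Finset.mem_filter.mp ((Finset.mem_filter.mp ((Finset.mem_filter.mp hnd).1)).1)).1
              exact Finset.mem_Icc.mpr (hmemS nd hndS).1.1
            have hfibn := Finset.card_eq_sum_card_fiberwise hmapsn
            have hpern : ∀ n ∈ Finset.Icc 1 ⌊x⌋₊,
                (((BI.filter (fun nd => FI nd = e)).filter (fun nd => nd.1 = n)).card : ℝ)
                  ≤ if n ∈ NS then ((Cδ * X^δ)^j : ℝ) else 0 := by
              intro n _
              rcases ((BI.filter (fun nd => FI nd = e)).filter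
                  (fun nd => nd.1 = n)).eq_empty_or_nonempty with h0 | ⟨nd₁, hnd₁⟩
              · rw [h0]
                simp only [Finset.card_empty, Nat.cast_zero]
                split
                · positivity
                · exact le_refl 0
              · have hnd₁f : nd₁ ∈ BI.filter (fun nd => FI nd = e) := (Finset.mem_filter.mp hnd₁).1
                have hnd₁n : nd₁.1 = n := (Finset.mem_filter.mp hnd₁).2
                have hnd₁S : nd₁ ∈ S :=
                  (Finset.mem_filter.mp ((Finset.mem_filter.mp ((Finset.mem_filter.mp hnd₁f).1)).1)).1
                have hm₁ := hmemS nd₁ hnd₁S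
                have hFIe1 : FI nd₁ = e := (Finset.mem_filter.mp hnd₁f).2
                have hnNS : n ∈ NS := by
                  rw [hNSdef, Finset.mem_filter]
                  have hnIcc : n ∈ Finset.Icc 1 ⌊x⌋₊ := by
                    rw [← hnd₁n]
                    exact Finset.mem_Icc.mpr hm₁.1.1
                  refine ⟨hnIcc, ?_⟩
                  intro i hi
                  have h1 := hm₁.2.1 i
                  have h2 : e i = nd₁.2 i := by
                    rw [← hFIe1]
                    simp only [hFI, if_pos hi]
                  rw [hnd₁n] at h1
                  rw [h2]
                  exact h1
                rw [if_pos hnNS]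
                have hsub3 : (BI.filter (fun nd => FI nd = e)).filter (fun nd => nd.1 = n)
                    ⊆ S.filter (fun nd => nd.1 = n ∧ ∀ i ∈ I, nd.2 i = e i) := by
                  intro nd hnd
                  simp only [Finset.mem_filter] at hnd ⊢
                  obtain ⟨⟨hndBI, hndFI⟩, hndn⟩ := hnd
                  have hndS : nd ∈ S :=
                    (Finset.mem_filter.mp ((Finset.mem_filter.mp hndBI).1)).1
                  refine ⟨hndS, hndn, ?_⟩
                  intro i hi
                  rw [← hndFI]
                  simp only [hFI, if_pos hi]
                calc (((BI.filter (fun nd => FI nd = e)).filter (fun nd => nd.1 = n)).card : ℝ)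
                    ≤ ((S.filter (fun nd => nd.1 = n ∧ ∀ i ∈ I, nd.2 i = e i)).card : ℝ) := by
                      exact_mod_cast Finset.card_le_card hsub3
                  _ ≤ (Cδ * X^δ)^j := hF n I e
            have hsumn : ∑ n ∈ Finset.Icc 1 ⌊x⌋₊, (if n ∈ NS then ((Cδ * X^δ)^j : ℝ) else 0)
                = (NS.card : ℝ) * (Cδ * X^δ)^j := by
              rw [← Finset.sum_filter]
              rw [Finset.filter_mem_eq_inter, Finset.inter_eq_right.mpr
                (by rw [hNSdef]; exact Finset.filter_subset _ _)]
              rw [Finset.sum_const, nsmul_eq_mul]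
            have he1I : ∀ i ∈ I, 1 ≤ e i := fun i _ => he1 i
            have hcopI : (↑I : Set (Fin j)).Pairwise fun i i' => Nat.Coprime (e i) (e i') := by
              intro i hi i' hi' hne
              have h1 := hm₀.2.2.1 i i' hne
              rw [heI i (Finset.mem_coe.mp hi), heI i' (Finset.mem_coe.mp hi')]
              exact h1
            have hNSb := hN I i₀ hi₀ e he1I hcopI
            have hukI : ∏ i ∈ I, ((e i:ℝ))^k = u^k := by rw [hu, ← Finset.prod_pow]
            have hNS2 : (NS.card : ℝ) ≤ (2 * T^2 + T^2) * u⁻¹ := by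
              have hTk : T^(k-1) * u ≤ u^k := by
                have h1 : T^(k-1) ≤ u^(k-1) := pow_le_pow_left₀ hT0.le hTu.le (k-1)
                have h2 : u^(k-1) * u = u^k := by
                  rw [← pow_succ]
                  congr 1
                  omega
                calc T^(k-1) * u ≤ u^(k-1) * u := mul_le_mul_of_nonneg_right h1 (by positivity)
                  _ = u^k := h2
              have h3 : X / u^k ≤ X / (T^(k-1) * u) :=
                div_le_div_of_nonneg_left hX0.le (by positivity) hTk
              have h4 : X / (T^(k-1) * u) = (X / T^(k-1)) * u⁻¹ := by
                rw [← div_div, div_eq_mul_inv]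
              have h5 : X / T^(k-1) = T^2 := by
                rw [← hTk1, div_eq_iff (by positivity), ← pow_add]
                congr 1
                omega
              have h6 : (1:ℝ) ≤ T^2 * u⁻¹ := by
                rw [← div_eq_mul_inv]
                exact (one_le_div hu0).mpr huT2
              have h7 : X / u^k ≤ T^2 * u⁻¹ := by
                rw [← h5, ← h4]
                exact h3
              calc (NS.card:ℝ) ≤ 2 * (X / ∏ i ∈ I, ((e i:ℝ))^k) + 1 := hNSb
                _ = 2 * (X / u^k) + 1 := by rw [hukI]
                _ ≤ 2 * (T^2 * u⁻¹) + T^2 * u⁻¹ := by linarith only [h6, h7]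
                _ = (2 * T^2 + T^2) * u⁻¹ := by ring
            have hprodinv : ∏ i, ((e i:ℝ))⁻¹ = u⁻¹ := by
              rw [Finset.prod_inv_distrib, ← huniv]
            calc ((BI.filter (fun nd => FI nd = e)).card : ℝ)
                = ∑ n ∈ Finset.Icc 1 ⌊x⌋₊,
                  (((BI.filter (fun nd => FI nd = e)).filter (fun nd => nd.1 = n)).card : ℝ) := by
                  rw [hfibn]
                  push_cast
                  rfl
              _ ≤ ∑ n ∈ Finset.Icc 1 ⌊x⌋₊, (if n ∈ NS then ((Cδ * X^δ)^j : ℝ) else 0) :=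
                  Finset.sum_le_sum hpern
              _ = (NS.card : ℝ) * (Cδ * X^δ)^j := hsumn
              _ ≤ ((2 * T^2 + T^2) * u⁻¹) * (Cδ * X^δ)^j :=
                  mul_le_mul_of_nonneg_right hNS2 (by positivity)
              _ = ((Cδ * X^δ)^j * (3 * T^2)) * ∏ i, ((e i:ℝ))⁻¹ := by
                  rw [hprodinv]
                  ring
        have hsumE : ∑ e ∈ EI, ∏ i, ((e i:ℝ))⁻¹ ≤ H^j := by
          have hps : ∑ e ∈ Fintype.piFinset (fun i => if i ∈ I then Finset.Icc 1 ⌊X⌋₊ else {1}),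
              ∏ i, ((e i:ℝ))⁻¹
              = ∏ i : Fin j, ∑ d ∈ (if i ∈ I then Finset.Icc 1 ⌊X⌋₊ else ({1} : Finset ℕ)),
                (d:ℝ)⁻¹ :=
            (Finset.prod_univ_sum (fun i => if i ∈ I then Finset.Icc 1 ⌊X⌋₊ else ({1} : Finset ℕ))
              (fun (_ : Fin j) (d : ℕ) => ((d:ℝ))⁻¹)).symm
          rw [hEI, hps]
          calc ∏ i : Fin j, (∑ d ∈ (if i ∈ I then Finset.Icc 1 ⌊X⌋₊ else ({1} : Finset ℕ)), (d:ℝ)⁻¹)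
              ≤ ∏ _i : Fin j, H := by
                apply Finset.prod_le_prod
                · intro i _
                  exact Finset.sum_nonneg (fun d _ => by positivity)
                · intro i _
                  by_cases hiI : i ∈ I
                  · rw [if_pos hiI, hHdef]
                  · rw [if_neg hiI]
                    simp only [Finset.sum_singleton, Nat.cast_one, inv_one]
                    exact hH1
            _ = H^j := by rw [Finset.prod_const, Finset.card_univ, Fintype.card_fin]
        calc (BI.card : ℝ)
            = ∑ e ∈ EI, ((BI.filter (fun nd => FI nd = e)).card : ℝ) := by
              rw [hfibB]
              push_cast
              rfl
          _ ≤ ∑ e ∈ EI, ((Cδ * X^δ)^j * (3 * T^2)) * ∏ i, ((e i:ℝ))⁻¹ :=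
              Finset.sum_le_sum hperB
          _ = ((Cδ * X^δ)^j * (3 * T^2)) * ∑ e ∈ EI, ∏ i, ((e i:ℝ))⁻¹ := by
              rw [← Finset.mul_sum]
          _ ≤ ((Cδ * X^δ)^j * (3 * T^2)) * H^j :=
              mul_le_mul_of_nonneg_left hsumE (by positivity)
          _ = 3 * T^2 * ((Cδ * X^δ)^j * H^j) := by ring
      calc ((S.filter (fun nd => ¬ QA nd ≤ X)).card : ℝ)
          ≤ (((Finset.univ : Finset (Fin j)).powerset.biUnion
            (fun I => B.filter (fun nd => T < ∏ i ∈ I, ((nd.2 i:ℝ))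
              ∧ ∏ i ∈ I, ((nd.2 i:ℝ)) ≤ T^2))).card : ℝ) := by
            exact_mod_cast Finset.card_le_card hBsub
        _ ≤ ∑ I ∈ (Finset.univ : Finset (Fin j)).powerset,
            ((B.filter (fun nd => T < ∏ i ∈ I, ((nd.2 i:ℝ))
              ∧ ∏ i ∈ I, ((nd.2 i:ℝ)) ≤ T^2)).card : ℝ) := by
            exact_mod_cast Finset.card_biUnion_le
        _ ≤ ∑ _I ∈ (Finset.univ : Finset (Fin j)).powerset, 3 * T^2 * ((Cδ * X^δ)^j * H^j) :=
            Finset.sum_le_sum (fun I _ => hBI I)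
        _ = (2:ℝ)^j * (3 * T^2 * ((Cδ * X^δ)^j * H^j)) := by
            rw [Finset.sum_const, Finset.card_powerset, Finset.card_univ, Fintype.card_fin,
              nsmul_eq_mul]
            push_cast
            ring
    have hSle : (S.card : ℝ) ≤ 3 * (X * y^(1-(k:ℝ))) * H^j
        + (2:ℝ)^j * (3 * T^2 * ((Cδ * X^δ)^j * H^j)) := by
      rw [hsplit]
      exact add_le_add hAb hBb
    have hconv1 : ((X^δ))^j = X^((j:ℝ)*δ) := by
      rw [← Real.rpow_natCast (X^δ) j, ← Real.rpow_mul hX0.le, mul_comm]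
    have hXδj1 : (1:ℝ) ≤ (X^δ)^j := by
      simpa using pow_le_pow_left₀ (by norm_num) hXδ1 j
    have hHj : H^j ≤ ((1 + 1/δ))^j * ((X^δ))^j := by
      rw [← mul_pow]
      exact pow_le_pow_left₀ hH0.le hHb j
    have h1δj : (1:ℝ) ≤ (1 + 1/δ)^j := by
      simpa using pow_le_pow_left₀ (by norm_num) h1δ j
    by_cases hreg : X ≤ x ^ ((k:ℝ)+1)
    · -- small regime
      have hXd2 : (X^δ)^j * (X^δ)^j ≤ x^ε := by
        have hconv2 : (X^δ)^j * (X^δ)^j = X^((j:ℝ)*δ + (j:ℝ)*δ) := by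
          rw [hconv1, ← Real.rpow_add hX0]
        have h1 : X^((j:ℝ)*δ + (j:ℝ)*δ) ≤ (x^((k:ℝ)+1))^((j:ℝ)*δ + (j:ℝ)*δ) :=
          Real.rpow_le_rpow hX0.le hreg (by positivity)
        have h2 : (x^((k:ℝ)+1))^((j:ℝ)*δ + (j:ℝ)*δ) = x^(((k:ℝ)+1)*((j:ℝ)*δ + (j:ℝ)*δ)) := by
          rw [← Real.rpow_mul hx0.le]
        have h3 : ((k:ℝ)+1)*((j:ℝ)*δ + (j:ℝ)*δ) = m0 := by
          rw [hδdef]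
          field_simp
          ring
        have h4 : x^m0 ≤ x^ε := Real.rpow_le_rpow_of_exponent_le hx1 (min_le_left _ _)
        rw [hconv2]
        rw [h3] at h2
        linarith only [h1, h2.le, h2.ge, h4]
      have hXdj : (X^δ)^j ≤ x^ε := by
        have : (X^δ)^j * 1 ≤ (X^δ)^j * (X^δ)^j :=
          mul_le_mul_of_nonneg_left hXδj1 (by positivity)
        rw [mul_one] at this
        linarith only [this, hXd2]
      have hterm1 : 3 * (X * y^(1-(k:ℝ))) * H^j ≤ C1 * x^ε * (X * y^(1-(k:ℝ))) := by
        have hXy : (0:ℝ) ≤ X * y^(1-(k:ℝ)) := by positivity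
        have h1 : H^j ≤ (1 + 1/δ)^j * x^ε := by
          calc H^j ≤ ((1 + 1/δ))^j * ((X^δ))^j := hHj
            _ ≤ (1 + 1/δ)^j * x^ε := mul_le_mul_of_nonneg_left hXdj (by positivity)
        have h2 : 3 * (1 + 1/δ)^j ≤ C1 := by
          rw [hC1, mul_pow]
          have h2a : (1:ℝ) ≤ 2^j * Cδ^j := by nlinarith only [h2j, hCδj]
          nlinarith only [h2a, h1δj, h2j, hCδj]
        calc 3 * (X * y^(1-(k:ℝ))) * H^j ≤ 3 * (X * y^(1-(k:ℝ))) * ((1 + 1/δ)^j * x^ε) :=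
              mul_le_mul_of_nonneg_left h1 (by positivity)
          _ = (3 * (1 + 1/δ)^j) * x^ε * (X * y^(1-(k:ℝ))) := by ring
          _ ≤ C1 * x^ε * (X * y^(1-(k:ℝ))) := by
              apply mul_le_mul_of_nonneg_right _ hXy
              exact mul_le_mul_of_nonneg_right h2 (by positivity)
      have hterm2 : (2:ℝ)^j * (3 * T^2 * ((Cδ * X^δ)^j * H^j)) ≤ C1 * x^ε * X^(2/((k:ℝ)+1)) := by
        have hT2nn : (0:ℝ) ≤ T^2 := by positivity
        have h1 : (Cδ * X^δ)^j * H^j ≤ (Cδ^j * (1 + 1/δ)^j) * ((X^δ)^j * (X^δ)^j) := by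
          rw [mul_pow]
          calc Cδ^j * (X^δ)^j * H^j ≤ Cδ^j * (X^δ)^j * ((1 + 1/δ)^j * (X^δ)^j) := by
                apply mul_le_mul_of_nonneg_left _ (by positivity)
                rw [← mul_pow]
                exact pow_le_pow_left₀ hH0.le hHb j
            _ = (Cδ^j * (1 + 1/δ)^j) * ((X^δ)^j * (X^δ)^j) := by ring
        have h2 : (Cδ^j * (1 + 1/δ)^j) * ((X^δ)^j * (X^δ)^j) ≤ (Cδ^j * (1 + 1/δ)^j) * x^ε :=
          mul_le_mul_of_nonneg_left hXd2 (by positivity)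
        calc (2:ℝ)^j * (3 * T^2 * ((Cδ * X^δ)^j * H^j))
            ≤ (2:ℝ)^j * (3 * T^2 * ((Cδ^j * (1 + 1/δ)^j) * x^ε)) := by
              apply mul_le_mul_of_nonneg_left _ (by positivity)
              apply mul_le_mul_of_nonneg_left _ (by positivity)
              exact le_trans h1 h2
          _ = (3 * 2^j * ((1 + 1/δ)^j * Cδ^j)) * x^ε * T^2 := by ring
          _ = C1 * x^ε * T^2 := by rw [hC1, mul_pow]
          _ = C1 * x^ε * X^(2/((k:ℝ)+1)) := by rw [hT2]
      calc (S.card : ℝ) ≤ 3 * (X * y^(1-(k:ℝ))) * H^j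
          + (2:ℝ)^j * (3 * T^2 * ((Cδ * X^δ)^j * H^j)) := hSle
        _ ≤ C1 * x^ε * (X * y^(1-(k:ℝ))) + C1 * x^ε * X^(2/((k:ℝ)+1)) := add_le_add hterm1 hterm2
        _ = C1 * x^ε * (X * y^(1-(k:ℝ)) + X^(2/((k:ℝ)+1))) := by ring
        _ ≤ (C1 + Cδ^j) * x^ε * (X * y^(1-(k:ℝ)) + X^(2/((k:ℝ)+1))) := by
            apply mul_le_mul_of_nonneg_right _ (by positivity)
            apply mul_le_mul_of_nonneg_right _ (by positivity)
            linarith only [hCδj]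
    · -- large regime
      push_neg at hreg
      have htriv : (S.card : ℝ) ≤ x * (Cδ * X^δ)^j := by
        have hmaps : ∀ nd ∈ S, nd.1 ∈ Finset.Icc 1 ⌊x⌋₊ := by
          intro nd hnd
          exact Finset.mem_Icc.mpr (hmemS nd hnd).1.1
        have hfib := Finset.card_eq_sum_card_fiberwise hmaps
        have hper : ∀ n ∈ Finset.Icc 1 ⌊x⌋₊,
            ((S.filter (fun nd => nd.1 = n)).card : ℝ) ≤ (Cδ * X^δ)^j := by
          intro n _
          have hsub : S.filter (fun nd => nd.1 = n) ⊆ S.filter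
              (fun nd => nd.1 = n ∧ ∀ i ∈ (∅ : Finset (Fin j)), nd.2 i = 1) := by
            intro nd hnd
            simp only [Finset.mem_filter] at hnd ⊢
            exact ⟨hnd.1, hnd.2, fun i hi => absurd hi (Finset.notMem_empty i)⟩
          calc ((S.filter (fun nd => nd.1 = n)).card : ℝ)
              ≤ ((S.filter (fun nd => nd.1 = n ∧ ∀ i ∈ (∅ : Finset (Fin j)),
                nd.2 i = 1)).card : ℝ) := by exact_mod_cast Finset.card_le_card hsub
            _ ≤ (Cδ * X^δ)^j := hF n ∅ (fun _ => 1)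
        calc (S.card:ℝ) = ∑ n ∈ Finset.Icc 1 ⌊x⌋₊,
            ((S.filter (fun nd => nd.1 = n)).card : ℝ) := by
              rw [hfib]
              push_cast
              rfl
          _ ≤ ∑ _n ∈ Finset.Icc 1 ⌊x⌋₊, (Cδ * X^δ)^j := Finset.sum_le_sum hper
          _ = ((Finset.Icc 1 ⌊x⌋₊).card : ℝ) * (Cδ * X^δ)^j := by
              rw [Finset.sum_const, nsmul_eq_mul]
          _ ≤ x * (Cδ * X^δ)^j := by
              apply mul_le_mul_of_nonneg_right _ (by positivity)
              rw [Nat.card_Icc]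
              simp only [Nat.add_sub_cancel]
              exact Nat.floor_le hx0.le
      have hxX : x ≤ X ^ (1/((k:ℝ)+1)) := by
        have h1 : x = (x^((k:ℝ)+1))^(1/((k:ℝ)+1)) := by
          rw [← Real.rpow_mul hx0.le, mul_one_div, div_self hk1R.ne', Real.rpow_one]
        rw [h1]
        exact Real.rpow_le_rpow (by positivity) hreg.le (by positivity)
      have hexp : X^(1/((k:ℝ)+1)) * X^((j:ℝ)*δ) ≤ X^(2/((k:ℝ)+1)) := by
        rw [← Real.rpow_add hX0]
        apply Real.rpow_le_rpow_of_exponent_le hX1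
        have hjδ : (j:ℝ)*δ = m0/(2*((k:ℝ)+1)) := by
          rw [hδdef]
          field_simp
        have hm01 : m0 ≤ 1 := min_le_right _ _
        have h2 : m0/(2*((k:ℝ)+1)) ≤ 1/((k:ℝ)+1) := by
          rw [div_le_div_iff₀ (by positivity) hk1R]
          nlinarith only [hm01, hk1R]
        have h3 : 1/((k:ℝ)+1) + 1/((k:ℝ)+1) = 2/((k:ℝ)+1) := by ring
        rw [hjδ]
        linarith only [h2, h3]
      have hXe0 : (0:ℝ) ≤ X^(2/((k:ℝ)+1)) := by positivity
      have hXy0 : (0:ℝ) ≤ X * y^(1-(k:ℝ)) := by positivity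
      calc (S.card:ℝ) ≤ x * (Cδ * X^δ)^j := htriv
        _ = x * (Cδ^j * (X^δ)^j) := by rw [mul_pow]
        _ = Cδ^j * (x * (X^δ)^j) := by ring
        _ ≤ Cδ^j * (X^(1/((k:ℝ)+1)) * X^((j:ℝ)*δ)) := by
            apply mul_le_mul_of_nonneg_left _ (by positivity)
            rw [hconv1]
            apply mul_le_mul_of_nonneg_right hxX (by positivity)
        _ ≤ Cδ^j * X^(2/((k:ℝ)+1)) := mul_le_mul_of_nonneg_left hexp (by positivity)
        _ ≤ (C1 + Cδ^j) * x^ε * (X * y^(1-(k:ℝ)) + X^(2/((k:ℝ)+1))) := by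
            have h1 : Cδ^j * X^(2/((k:ℝ)+1)) ≤ (C1 + Cδ^j) * X^(2/((k:ℝ)+1)) := by
              apply mul_le_mul_of_nonneg_right _ hXe0
              linarith only [hC1pos]
            have h2 : (C1 + Cδ^j) * X^(2/((k:ℝ)+1))
                ≤ (C1 + Cδ^j) * (X * y^(1-(k:ℝ)) + X^(2/((k:ℝ)+1))) := by
              apply mul_le_mul_of_nonneg_left _ (by positivity)
              linarith only [hXy0]
            have h3 : (C1 + Cδ^j) * (X * y^(1-(k:ℝ)) + X^(2/((k:ℝ)+1)))
                ≤ (C1 + Cδ^j) * x^ε * (X * y^(1-(k:ℝ)) + X^(2/((k:ℝ)+1))) := by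
              have h4 : (C1 + Cδ^j) * 1 ≤ (C1 + Cδ^j) * x^ε := by
                apply mul_le_mul_of_nonneg_left hxε (by positivity)
              have h5 : (0:ℝ) ≤ X * y^(1-(k:ℝ)) + X^(2/((k:ℝ)+1)) := by positivity
              rw [mul_one] at h4
              exact mul_le_mul_of_nonneg_right h4 h5
            linarith only [h1, h2, h3]
end

section
/- For any real X > 0, positive integer q, j ≥ 1, and any function A: ℤ^j → ℝ of the form A(h_1,...,h_j) depending only on the differences h_i − h_j (i.e. translation-invariant) with A summable on the relevant range, one has ∑_{f ∈ ℤ^{j−1}} A(f_1,...,f_{j−1},0)·|I(X,q;(f,0))| = q ∫_0^1 ∑_{h ∈ ℤ^j, −u < h_i ≤ X/q − u ∀i} A(h) du, where I(X,q;h) = ∩_{i=1}^{j} (−h_i q, X − h_i q]. -/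
open MeasureTheory Set

private lemma aux_iInter_Ioc {n : ℕ} (a b : Fin (n+1) → ℝ) :
    (⋂ i, Set.Ioc (a i) (b i)) =
      Set.Ioc (Finset.univ.sup' Finset.univ_nonempty a)
        (Finset.univ.inf' Finset.univ_nonempty b) := by
  ext x
  simp [Set.mem_iInter, Finset.sup'_lt_iff, Finset.le_inf'_iff, forall_and]

private lemma aux_sup'_add {n : ℕ} (f : Fin (n+1) → ℝ) (c : ℝ) :
    Finset.univ.sup' Finset.univ_nonempty f + c
      = Finset.univ.sup' Finset.univ_nonempty (fun i => f i + c) :=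
  Finset.comp_sup'_eq_sup'_comp _ (· + c) (fun x y => (max_add_add_right x y c).symm)

private lemma aux_inf'_add {n : ℕ} (f : Fin (n+1) → ℝ) (c : ℝ) :
    Finset.univ.inf' Finset.univ_nonempty f + c
      = Finset.univ.inf' Finset.univ_nonempty (fun i => f i + c) :=
  Finset.apply_inf'_eq_inf'_comp _ (· + c) (fun x y => (min_add_add_right x y c).symm)

private lemma aux_sup'_mul {n : ℕ} (f : Fin (n+1) → ℝ) {c : ℝ} (hc : 0 ≤ c) :
    c * Finset.univ.sup' Finset.univ_nonempty f
      = Finset.univ.sup' Finset.univ_nonempty (fun i => c * f i) :=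
  Finset.comp_sup'_eq_sup'_comp _ (c * ·) (fun x y => mul_max_of_nonneg x y hc)

private lemma aux_inf'_mul {n : ℕ} (f : Fin (n+1) → ℝ) {c : ℝ} (hc : 0 ≤ c) :
    c * Finset.univ.inf' Finset.univ_nonempty f
      = Finset.univ.inf' Finset.univ_nonempty (fun i => c * f i) :=
  Finset.apply_inf'_eq_inf'_comp _ (c * ·) (fun x y => mul_min_of_nonneg x y hc)

private lemma aux_sum_vol (α β : ℝ) :
    ∑' n : ℤ, volume (Set.Ioc (α - n) (β - n) ∩ Set.Ioc (0:ℝ) 1)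
      = volume (Set.Ioc α β) := by
  have h1 : ∀ n : ℤ, Set.Ioc (α - n) (β - n) ∩ Set.Ioc (0:ℝ) 1
      = (fun x : ℝ => x + (n:ℝ)) ⁻¹' (Set.Ioc α β ∩ Set.Ioc (n:ℝ) (n+1)) := by
    intro n
    ext x
    simp only [Set.mem_inter_iff, Set.mem_Ioc, Set.mem_preimage]
    constructor
    · rintro ⟨⟨h1, h2⟩, h3, h4⟩
      exact ⟨⟨by linarith, by linarith⟩, by linarith, by linarith⟩
    · rintro ⟨⟨h1, h2⟩, h3, h4⟩
      exact ⟨⟨by linarith, by linarith⟩, by linarith, by linarith⟩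
  calc ∑' n : ℤ, volume (Set.Ioc (α - n) (β - n) ∩ Set.Ioc (0:ℝ) 1)
      = ∑' n : ℤ, volume (Set.Ioc α β ∩ Set.Ioc (n:ℝ) (n+1)) := by
        refine tsum_congr fun n => ?_
        rw [h1 n, measure_preimage_add_right]
    _ = volume (⋃ n : ℤ, Set.Ioc α β ∩ Set.Ioc (n:ℝ) (n+1)) := by
        refine (measure_iUnion ?_ ?_).symm
        · intro i j hij
          exact ((Set.pairwise_disjoint_Ioc_intCast ℝ hij).mono
            Set.inter_subset_right Set.inter_subset_right)
        · exact fun n => measurableSet_Ioc.inter measurableSet_Ioc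
    _ = volume (Set.Ioc α β) := by
        rw [← Set.inter_iUnion, iUnion_Ioc_intCast, Set.inter_univ]

open MeasureTheory in
/-- For a translation-invariant nonnegative A : ℤ^j → ℝ,
∑_{f ∈ ℤ^{j-1}} A(f,0) |I(X,q;(f,0))| = q ∫₀¹ ∑_{h ∈ ℤ^j, -u < h_i ≤ X/q - u} A(h) du,
where I(X,q;h) = ∩_i (-h_i q, X - h_i q]. -/
theorem stmt_12 (X : ℝ) (hX : 0 < X) (q : ℕ) (hq : 0 < q) (m : ℕ)
    (A : (Fin (m + 1) → ℤ) → ℝ) (hA0 : ∀ h, 0 ≤ A h)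
    (hAinv : ∀ (h : Fin (m + 1) → ℤ) (t : ℤ), A (fun i => h i + t) = A h) :
    ∑' f : Fin m → ℤ, A (Fin.snoc f 0) *
        (volume (⋂ i, Set.Ioc (-(((Fin.snoc f (0 : ℤ) : Fin (m + 1) → ℤ) i : ℝ) * q))
          (X - ((Fin.snoc f (0 : ℤ) : Fin (m + 1) → ℤ) i : ℝ) * q))).toReal
      = q * ∫ u in (0 : ℝ)..1, ∑' h : Fin (m + 1) → ℤ,
          (if ∀ i, -u < (h i : ℝ) ∧ (h i : ℝ) ≤ X / q - u then A h else 0) := by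
  classical
  have hq0 : (0:ℝ) < (q:ℝ) := by exact_mod_cast hq
  have hqne : (q:ℝ) ≠ 0 := ne_of_gt hq0
  set a : (Fin (m+1) → ℤ) → ℝ :=
    fun h => Finset.univ.sup' Finset.univ_nonempty (fun i => -(h i : ℝ)) with ha
  set b : (Fin (m+1) → ℤ) → ℝ :=
    fun h => Finset.univ.inf' Finset.univ_nonempty (fun i => X / (q:ℝ) - (h i : ℝ)) with hb
  -- volume of the intersection
  have vol_eq : ∀ h : Fin (m+1) → ℤ,
      volume (⋂ i, Set.Ioc (-((h i : ℝ) * q)) (X - (h i : ℝ) * q))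
        = ENNReal.ofReal (q:ℝ) * volume (Set.Ioc (a h) (b h)) := by
    intro h
    rw [aux_iInter_Ioc, Real.volume_Ioc, Real.volume_Ioc, ← ENNReal.ofReal_mul hq0.le]
    congr 1
    have e1 : (q:ℝ) * b h = Finset.univ.inf' Finset.univ_nonempty
        (fun i => X - (h i : ℝ) * q) := by
      rw [hb, aux_inf'_mul _ hq0.le]
      congr 1
      funext i
      field_simp
    have e2 : (q:ℝ) * a h = Finset.univ.sup' Finset.univ_nonempty
        (fun i => -((h i : ℝ) * q)) := by
      rw [ha, aux_sup'_mul _ hq0.le]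
      congr 1
      funext i
      ring
    rw [mul_sub, e1, e2]
  have vol_ne_top : ∀ h : Fin (m+1) → ℤ,
      volume (Set.Ioc (a h) (b h)) ≠ ⊤ := by
    intro h; rw [Real.volume_Ioc]; exact ENNReal.ofReal_ne_top
  -- the condition as interval membership
  have cond_iff : ∀ (h : Fin (m+1) → ℤ) (u : ℝ),
      (∀ i, -u < (h i : ℝ) ∧ (h i : ℝ) ≤ X / q - u) ↔ u ∈ Set.Ioc (a h) (b h) := by
    intro h u
    rw [Set.mem_Ioc, ha, hb]
    simp only [Finset.sup'_lt_iff, Finset.le_inf'_iff, Finset.mem_univ, true_implies]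
    constructor
    · intro H
      exact ⟨fun i => by linarith [(H i).1], fun i => by linarith [(H i).2]⟩
    · rintro ⟨H1, H2⟩ i
      exact ⟨by linarith [H1 i], by linarith [H2 i]⟩
  -- shifting
  have ashift : ∀ (f : Fin m → ℤ) (n : ℤ),
      a (fun i => (Fin.snoc f (0:ℤ) : Fin (m+1) → ℤ) i + n) = a (Fin.snoc f 0) - (n:ℝ) := by
    intro f n
    have hfun : (fun i => -((((Fin.snoc f (0:ℤ) : Fin (m+1) → ℤ) i + n : ℤ) : ℝ)))
        = fun i => (-(((Fin.snoc f (0:ℤ) : Fin (m+1) → ℤ) i : ℝ))) + (-(n:ℝ)) := by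
      funext i; push_cast; ring
    simp only [ha]
    rw [hfun, ← aux_sup'_add, sub_eq_add_neg]
  have bshift : ∀ (f : Fin m → ℤ) (n : ℤ),
      b (fun i => (Fin.snoc f (0:ℤ) : Fin (m+1) → ℤ) i + n) = b (Fin.snoc f 0) - (n:ℝ) := by
    intro f n
    have hfun : (fun i => X / (q:ℝ) - ((((Fin.snoc f (0:ℤ) : Fin (m+1) → ℤ) i + n : ℤ) : ℝ)))
        = fun i => (X / (q:ℝ) - (((Fin.snoc f (0:ℤ) : Fin (m+1) → ℤ) i : ℝ))) + (-(n:ℝ)) := by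
      funext i; push_cast; ring
    simp only [hb]
    rw [hfun, ← aux_inf'_add, sub_eq_add_neg]
  -- the equivalence
  let e : (Fin (m+1) → ℤ) ≃ (Fin m → ℤ) × ℤ :=
    { toFun := fun h => (fun i => h i.castSucc - h (Fin.last m), h (Fin.last m))
      invFun := fun p i => (Fin.snoc p.1 (0:ℤ) : Fin (m+1) → ℤ) i + p.2
      left_inv := by
        intro h
        funext i
        induction i using Fin.lastCases with
        | last => simp
        | cast i => simp
      right_inv := by
        rintro ⟨f, n⟩
        refine Prod.ext ?_ ?_
        · funext i; simp
        · simp }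
  -- per-f inner sum
  have key : ∀ f : Fin m → ℤ, (∑' n : ℤ,
        ENNReal.ofReal (A (fun i => (Fin.snoc f (0:ℤ) : Fin (m+1) → ℤ) i + n)) *
          volume (Set.Ioc (a (fun i => (Fin.snoc f (0:ℤ) : Fin (m+1) → ℤ) i + n))
              (b (fun i => (Fin.snoc f (0:ℤ) : Fin (m+1) → ℤ) i + n))
            ∩ Set.Ioc (0:ℝ) 1))
      = ENNReal.ofReal (A (Fin.snoc f 0)) *
          volume (Set.Ioc (a (Fin.snoc f 0)) (b (Fin.snoc f 0))) := by
    intro f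
    have hterm : ∀ n : ℤ,
        ENNReal.ofReal (A (fun i => (Fin.snoc f (0:ℤ) : Fin (m+1) → ℤ) i + n)) *
          volume (Set.Ioc (a (fun i => (Fin.snoc f (0:ℤ) : Fin (m+1) → ℤ) i + n))
              (b (fun i => (Fin.snoc f (0:ℤ) : Fin (m+1) → ℤ) i + n))
            ∩ Set.Ioc (0:ℝ) 1)
        = ENNReal.ofReal (A (Fin.snoc f 0)) *
            volume (Set.Ioc (a (Fin.snoc f 0) - (n:ℝ)) (b (Fin.snoc f 0) - (n:ℝ))
              ∩ Set.Ioc (0:ℝ) 1) := by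
      intro n
      rw [hAinv (Fin.snoc f 0) n, ashift, bshift]
    rw [tsum_congr hterm, ENNReal.tsum_mul_left, aux_sum_vol]
  -- Tonelli
  have tonelli : (∫⁻ u in Set.Ioc (0:ℝ) 1,
        ∑' h : Fin (m+1) → ℤ,
          (Set.Ioc (a h) (b h)).indicator (fun _ => ENNReal.ofReal (A h)) u)
      = ∑' h : Fin (m+1) → ℤ, ENNReal.ofReal (A h) *
          volume (Set.Ioc (a h) (b h) ∩ Set.Ioc (0:ℝ) 1) := by
    rw [lintegral_tsum (fun h => (measurable_const.indicator measurableSet_Ioc).aemeasurable)]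
    refine tsum_congr fun h => ?_
    rw [lintegral_indicator measurableSet_Ioc, setLIntegral_const,
      Measure.restrict_apply measurableSet_Ioc]
  -- reindex
  have reindex : (∑' h : Fin (m+1) → ℤ, ENNReal.ofReal (A h) *
        volume (Set.Ioc (a h) (b h) ∩ Set.Ioc (0:ℝ) 1))
      = ∑' f : Fin m → ℤ, ENNReal.ofReal (A (Fin.snoc f 0)) *
          volume (Set.Ioc (a (Fin.snoc f 0)) (b (Fin.snoc f 0))) := by
    rw [← Equiv.tsum_eq e.symm (fun h => ENNReal.ofReal (A h) *
        volume (Set.Ioc (a h) (b h) ∩ Set.Ioc (0:ℝ) 1)), ENNReal.tsum_prod']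
    exact tsum_congr fun f => key f
  -- finiteness
  have hT : (∑' f : Fin m → ℤ, ENNReal.ofReal (A (Fin.snoc f 0)) *
        volume (Set.Ioc (a (Fin.snoc f 0)) (b (Fin.snoc f 0)))) ≠ ⊤ := by
    set C : ℤ := ⌈X / (q:ℝ)⌉ with hC
    have hCle : X / (q:ℝ) ≤ (C:ℝ) := Int.le_ceil _
    have hzero : ∀ f : Fin m → ℤ, f ∉ Fintype.piFinset (fun _ : Fin m => Finset.Icc (-C) C) →
        ENNReal.ofReal (A (Fin.snoc f 0)) *
          volume (Set.Ioc (a (Fin.snoc f 0)) (b (Fin.snoc f 0))) = 0 := by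
      intro f hf
      rw [Fintype.mem_piFinset] at hf
      push_neg at hf
      obtain ⟨i, hi⟩ := hf
      rw [Finset.mem_Icc] at hi
      push_neg at hi
      have hb1 : b (Fin.snoc f 0) ≤ X / (q:ℝ) := by
        have := Finset.inf'_le (b := Fin.last m)
          (f := fun i => X / (q:ℝ) - ((Fin.snoc f (0:ℤ) : Fin (m+1) → ℤ) i : ℝ))
          (Finset.mem_univ _)
        rw [hb]
        simpa only [Fin.snoc_last, Fin.snoc_castSucc, Int.cast_zero, sub_zero, neg_zero] using this
      have hb2 : b (Fin.snoc f 0) ≤ X / (q:ℝ) - (f i : ℝ) := by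
        have := Finset.inf'_le (b := Fin.castSucc i)
          (f := fun i => X / (q:ℝ) - ((Fin.snoc f (0:ℤ) : Fin (m+1) → ℤ) i : ℝ))
          (Finset.mem_univ _)
        rw [hb]
        simpa only [Fin.snoc_last, Fin.snoc_castSucc, Int.cast_zero, sub_zero, neg_zero] using this
      have ha1 : (0:ℝ) ≤ a (Fin.snoc f 0) := by
        have := Finset.le_sup' (b := Fin.last m)
          (f := fun i => -(((Fin.snoc f (0:ℤ) : Fin (m+1) → ℤ) i : ℝ)))
          (Finset.mem_univ _)
        rw [ha]
        simpa only [Fin.snoc_last, Fin.snoc_castSucc, Int.cast_zero, sub_zero, neg_zero] using this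
      have ha2 : -(f i : ℝ) ≤ a (Fin.snoc f 0) := by
        have := Finset.le_sup' (b := Fin.castSucc i)
          (f := fun i => -(((Fin.snoc f (0:ℤ) : Fin (m+1) → ℤ) i : ℝ)))
          (Finset.mem_univ _)
        rw [ha]
        simpa only [Fin.snoc_last, Fin.snoc_castSucc, Int.cast_zero, sub_zero, neg_zero] using this
      have hba : b (Fin.snoc f 0) ≤ a (Fin.snoc f 0) := by
        rcases lt_or_ge (f i) (-C) with h1 | h1
        · have hcast : (C:ℝ) < -(f i : ℝ) := by exact_mod_cast (by omega : C < -f i)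
          linarith
        · have h2 := hi h1
          have hcast : (C:ℝ) < (f i : ℝ) := by exact_mod_cast h2
          linarith
      rw [Set.Ioc_eq_empty (not_lt.mpr hba), measure_empty, mul_zero]
    rw [tsum_eq_sum hzero]
    exact (ENNReal.sum_lt_top.mpr fun f _ => ENNReal.mul_lt_top ENNReal.ofReal_lt_top
      (lt_top_iff_ne_top.mpr (vol_ne_top _))).ne
  -- pointwise identification of the integrand
  have hne : ∀ (u : ℝ) (h : Fin (m+1) → ℤ),
      (Set.Ioc (a h) (b h)).indicator (fun _ => ENNReal.ofReal (A h)) u ≠ ⊤ := by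
    intro u h
    by_cases hc : u ∈ Set.Ioc (a h) (b h)
    · rw [Set.indicator_of_mem hc]; exact ENNReal.ofReal_ne_top
    · rw [Set.indicator_of_notMem hc]; exact ENNReal.zero_ne_top
  have hg : ∀ u : ℝ,
      (∑' h : Fin (m+1) → ℤ, if ∀ i, -u < (h i : ℝ) ∧ (h i : ℝ) ≤ X / q - u then A h else 0)
      = (∑' h : Fin (m+1) → ℤ,
          (Set.Ioc (a h) (b h)).indicator (fun _ => ENNReal.ofReal (A h)) u).toReal := by
    intro u
    rw [ENNReal.tsum_toReal_eq (hne u)]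
    refine tsum_congr fun h => ?_
    by_cases hc : u ∈ Set.Ioc (a h) (b h)
    · rw [if_pos ((cond_iff h u).mpr hc), Set.indicator_of_mem hc,
        ENNReal.toReal_ofReal (hA0 h)]
    · rw [if_neg (fun hcond => hc ((cond_iff h u).mp hcond)), Set.indicator_of_notMem hc,
        ENNReal.toReal_zero]
  have Gmeas : Measurable (fun u : ℝ => ∑' h : Fin (m+1) → ℤ,
      (Set.Ioc (a h) (b h)).indicator (fun _ => ENNReal.ofReal (A h)) u) :=
    Measurable.ennreal_tsum fun h => measurable_const.indicator measurableSet_Ioc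
  have h2f : (∫⁻ u in Set.Ioc (0:ℝ) 1, ∑' h : Fin (m+1) → ℤ,
      (Set.Ioc (a h) (b h)).indicator (fun _ => ENNReal.ofReal (A h)) u) ≠ ⊤ := by
    rw [tonelli, reindex]; exact hT
  have hRHS : (∫ u in (0:ℝ)..1, ∑' h : Fin (m+1) → ℤ,
        (if ∀ i, -u < (h i : ℝ) ∧ (h i : ℝ) ≤ X / q - u then A h else 0))
      = (∑' f : Fin m → ℤ, ENNReal.ofReal (A (Fin.snoc f 0)) *
          volume (Set.Ioc (a (Fin.snoc f 0)) (b (Fin.snoc f 0)))).toReal := by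
    rw [intervalIntegral.integral_of_le (zero_le_one)]
    calc (∫ u in Set.Ioc (0:ℝ) 1, ∑' h : Fin (m+1) → ℤ,
          (if ∀ i, -u < (h i : ℝ) ∧ (h i : ℝ) ≤ X / q - u then A h else 0))
        = ∫ u in Set.Ioc (0:ℝ) 1, (∑' h : Fin (m+1) → ℤ,
            (Set.Ioc (a h) (b h)).indicator (fun _ => ENNReal.ofReal (A h)) u).toReal := by
          simp only [hg]
      _ = (∫⁻ u in Set.Ioc (0:ℝ) 1, ∑' h : Fin (m+1) → ℤ,
            (Set.Ioc (a h) (b h)).indicator (fun _ => ENNReal.ofReal (A h)) u).toReal :=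
          integral_toReal Gmeas.aemeasurable (ae_lt_top Gmeas h2f)
      _ = _ := by rw [tonelli, reindex]
  have hterm_ne : ∀ f : Fin m → ℤ,
      ENNReal.ofReal (A (Fin.snoc f 0)) *
        volume (⋂ i, Set.Ioc (-(((Fin.snoc f (0 : ℤ) : Fin (m + 1) → ℤ) i : ℝ) * q))
          (X - ((Fin.snoc f (0 : ℤ) : Fin (m + 1) → ℤ) i : ℝ) * q)) ≠ ⊤ := by
    intro f
    rw [vol_eq]
    exact ENNReal.mul_ne_top ENNReal.ofReal_ne_top
      (ENNReal.mul_ne_top ENNReal.ofReal_ne_top (vol_ne_top _))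
  calc ∑' f : Fin m → ℤ, A (Fin.snoc f 0) *
        (volume (⋂ i, Set.Ioc (-(((Fin.snoc f (0 : ℤ) : Fin (m + 1) → ℤ) i : ℝ) * q))
          (X - ((Fin.snoc f (0 : ℤ) : Fin (m + 1) → ℤ) i : ℝ) * q))).toReal
      = ∑' f : Fin m → ℤ, (ENNReal.ofReal (A (Fin.snoc f 0)) *
          volume (⋂ i, Set.Ioc (-(((Fin.snoc f (0 : ℤ) : Fin (m + 1) → ℤ) i : ℝ) * q))
            (X - ((Fin.snoc f (0 : ℤ) : Fin (m + 1) → ℤ) i : ℝ) * q))).toReal := by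
        refine tsum_congr fun f => ?_
        rw [ENNReal.toReal_mul, ENNReal.toReal_ofReal (hA0 _)]
    _ = (∑' f : Fin m → ℤ, ENNReal.ofReal (A (Fin.snoc f 0)) *
          volume (⋂ i, Set.Ioc (-(((Fin.snoc f (0 : ℤ) : Fin (m + 1) → ℤ) i : ℝ) * q))
            (X - ((Fin.snoc f (0 : ℤ) : Fin (m + 1) → ℤ) i : ℝ) * q))).toReal :=
        (ENNReal.tsum_toReal_eq hterm_ne).symm
    _ = (ENNReal.ofReal (q:ℝ) * ∑' f : Fin m → ℤ, ENNReal.ofReal (A (Fin.snoc f 0)) *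
          volume (Set.Ioc (a (Fin.snoc f 0)) (b (Fin.snoc f 0)))).toReal := by
        rw [← ENNReal.tsum_mul_left]
        congr 1
        refine tsum_congr fun f => ?_
        rw [vol_eq (Fin.snoc f 0)]
        ring
    _ = (q:ℝ) * (∑' f : Fin m → ℤ, ENNReal.ofReal (A (Fin.snoc f 0)) *
          volume (Set.Ioc (a (Fin.snoc f 0)) (b (Fin.snoc f 0)))).toReal := by
        rw [ENNReal.toReal_mul, ENNReal.toReal_ofReal hq0.le]
    _ = _ := by rw [hRHS]
end

section
/- The count of k-free integers up to X coprime to q satisfies ∑_{n ≤ X, (n,q)=1} μ_k(n) = A_q·X + O_ε(τ(q) X^{1/k + ε}), where A_q = (φ(q)/q) ∏_{p ∤ q}(1 − p^{−k}). -/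
open Classical

section StmtAux

open Finset ArithmeticFunction

noncomputable def Tcop (q M : ℕ) : ℕ := ((Finset.Icc 1 M).filter (fun m => Nat.gcd m q = 1)).card

noncomputable def fEuler (k q : ℕ) : ℕ → ℝ :=
  fun d => if Nat.gcd d q = 1 then ((moebius d : ℤ) : ℝ) / (d:ℝ)^k else 0

lemma aux_msum (n : ℕ) :
    (∑ d ∈ n.divisors, ((moebius d : ℤ) : ℝ)) = if n = 1 then 1 else 0 := by
  have h := congrArg (fun f : ArithmeticFunction ℝ => f n)
    (coe_moebius_mul_coe_zeta (R := ℝ))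
  simp only [coe_mul_zeta_apply, one_apply, intCoe_apply] at h
  exact h

lemma aux_sq_prod {s : Finset ℕ} (hs : ∀ p ∈ s, p.Prime) : Squarefree (∏ p ∈ s, p) := by
  induction s using Finset.induction with
  | empty => simp
  | @insert a s ha ih =>
    rw [Finset.prod_insert ha]
    have hap : a.Prime := hs a (Finset.mem_insert_self a s)
    have hcop : Nat.Coprime a (∏ p ∈ s, p) := by
      apply Nat.Coprime.prod_right
      intro p hp
      exact (Nat.coprime_primes hap (hs p (Finset.mem_insert_of_mem hp))).mpr
        (fun h => ha (h ▸ hp))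
    rw [Nat.squarefree_mul hcop]
    exact ⟨hap.squarefree, ih fun p hp => hs p (Finset.mem_insert_of_mem hp)⟩

lemma aux_prod_pow_dvd {s : Finset ℕ} {n k : ℕ} (hs : ∀ p ∈ s, p.Prime)
    (h : ∀ p ∈ s, p ^ k ∣ n) : (∏ p ∈ s, p ^ k) ∣ n := by
  induction s using Finset.induction with
  | empty => simpa using one_dvd n
  | @insert a s ha ih =>
    rw [Finset.prod_insert ha]
    have hap : a.Prime := hs a (Finset.mem_insert_self a s)
    have hcop : Nat.Coprime (a ^ k) (∏ p ∈ s, p ^ k) := by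
      apply Nat.Coprime.pow_left
      apply Nat.Coprime.prod_right
      intro p hp
      exact Nat.Coprime.pow_right _
        ((Nat.coprime_primes hap (hs p (Finset.mem_insert_of_mem hp))).mpr
          (fun he => ha (he ▸ hp)))
    exact hcop.mul_dvd_of_dvd_of_dvd (h a (Finset.mem_insert_self a s))
      (ih (fun p hp => hs p (Finset.mem_insert_of_mem hp))
        (fun p hp => h p (Finset.mem_insert_of_mem hp)))

lemma aux_kfree (k n : ℕ) (hk : 1 ≤ k) (hn : n ≠ 0) :
    (if ∀ p : ℕ, p.Prime → ¬ p ^ k ∣ n then (1:ℝ) else 0)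
      = ∑ d ∈ n.divisors.filter (fun d => d ^ k ∣ n), ((moebius d : ℤ) : ℝ) := by
  have hk0 : k ≠ 0 := by omega
  set s : Finset ℕ := n.primeFactors.filter (fun p => p ^ k ∣ n) with hs
  have hsp : ∀ p ∈ s, p.Prime := fun p hp =>
    Nat.prime_of_mem_primeFactors (Finset.mem_filter.mp hp).1
  set r : ℕ := ∏ p ∈ s, p with hr
  have hrsq : Squarefree r := aux_sq_prod hsp
  have hr0 : r ≠ 0 := hrsq.ne_zero
  have hrk : r ^ k ∣ n := by
    rw [hr, ← Finset.prod_pow]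
    exact aux_prod_pow_dvd hsp (fun p hp => (Finset.mem_filter.mp hp).2)
  have hdvd_iff : ∀ d : ℕ, d ∣ r ↔ (Squarefree d ∧ d ^ k ∣ n) := by
    intro d
    constructor
    · intro hd
      exact ⟨hrsq.squarefree_of_dvd hd, dvd_trans (pow_dvd_pow_of_dvd hd k) hrk⟩
    · rintro ⟨hsq, hdk⟩
      have hd : d = ∏ p ∈ d.primeFactors, p := (Nat.prod_primeFactors_of_squarefree hsq).symm
      have hsubs : d.primeFactors ⊆ s := by
        intro p hp
        have hpp := Nat.prime_of_mem_primeFactors hp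
        have hpd : p ∣ d := Nat.dvd_of_mem_primeFactors hp
        have hpk : p ^ k ∣ n := dvd_trans (pow_dvd_pow_of_dvd hpd k) hdk
        have hpn : p ∣ n := dvd_trans (dvd_trans hpd (dvd_pow_self d hk0)) hdk
        exact Finset.mem_filter.mpr ⟨Nat.mem_primeFactors.mpr ⟨hpp, hpn, hn⟩, hpk⟩
      rw [hd, hr]
      exact Finset.prod_dvd_prod_of_subset _ _ _ hsubs
  have hcond : (∀ p : ℕ, p.Prime → ¬ p ^ k ∣ n) ↔ r = 1 := by
    constructor
    · intro h
      have : s = ∅ := by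
        rw [Finset.eq_empty_iff_forall_notMem]
        intro p hp
        exact h p (hsp p hp) (Finset.mem_filter.mp hp).2
      rw [hr, this, Finset.prod_empty]
    · intro h1 p hp hpk
      have hpn : p ∣ n := dvd_trans (dvd_pow_self p hk0) hpk
      have : p ∈ s := Finset.mem_filter.mpr ⟨Nat.mem_primeFactors.mpr ⟨hp, hpn, hn⟩, hpk⟩
      have : p ∣ r := hr ▸ Finset.dvd_prod_of_mem _ this
      rw [h1, Nat.dvd_one] at this
      exact hp.ne_one this
  have hsum : ∑ d ∈ n.divisors.filter (fun d => d ^ k ∣ n), ((moebius d : ℤ) : ℝ)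
      = ∑ d ∈ r.divisors, ((moebius d : ℤ) : ℝ) := by
    symm
    apply Finset.sum_subset
    · intro d hd
      have hdr : d ∣ r := (Nat.mem_divisors.mp hd).1
      obtain ⟨hdsq, hdk⟩ := (hdvd_iff d).mp hdr
      have hdn : d ∣ n := dvd_trans (dvd_pow_self d hk0) hdk
      exact Finset.mem_filter.mpr ⟨Nat.mem_divisors.mpr ⟨hdn, hn⟩, hdk⟩
    · intro d hd hnd
      by_cases hdsq : Squarefree d
      · exfalso
        apply hnd
        have hdk : d ^ k ∣ n := (Finset.mem_filter.mp hd).2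
        exact Nat.mem_divisors.mpr ⟨(hdvd_iff d).mpr ⟨hdsq, hdk⟩, hr0⟩
      · rw [moebius_eq_zero_of_not_squarefree hdsq]; simp
  rw [hsum, aux_msum r]
  simp only [hcond]

lemma aux_moebius_abs (e : ℕ) : |((moebius e : ℤ) : ℝ)| ≤ 1 := by
  by_cases h : Squarefree e
  · have := abs_moebius_eq_one_of_squarefree h
    calc |((moebius e : ℤ) : ℝ)| = ((|moebius e| : ℤ) : ℝ) := by push_cast; rfl
    _ = 1 := by rw [this]; norm_num
    _ ≤ 1 := le_refl _
  · rw [moebius_eq_zero_of_not_squarefree h]; norm_num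

lemma aux_T (q M : ℕ) (hq : q ≠ 0) :
    ((Tcop q M : ℕ) : ℝ) = ∑ e ∈ q.divisors, ((moebius e : ℤ) : ℝ) * ((M / e : ℕ) : ℝ) := by
  have h1 : ((Tcop q M : ℕ) : ℝ) = ∑ m ∈ Finset.Icc 1 M, if Nat.gcd m q = 1 then (1:ℝ) else 0 := by
    rw [Tcop, Finset.sum_boole]
  rw [h1]
  have h2 : ∀ m ∈ Finset.Icc 1 M, (if Nat.gcd m q = 1 then (1:ℝ) else 0)
      = ∑ e ∈ q.divisors, if e ∣ m then ((moebius e : ℤ) : ℝ) else 0 := by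
    intro m hm
    have := aux_msum (Nat.gcd m q)
    rw [← this, ← Finset.sum_filter]
    apply Finset.sum_congr _ (fun _ _ => rfl)
    ext e
    simp only [Nat.mem_divisors, Finset.mem_filter]
    constructor
    · rintro ⟨he, -⟩
      exact ⟨⟨(Nat.dvd_gcd_iff.mp he).2, hq⟩, (Nat.dvd_gcd_iff.mp he).1⟩
    · rintro ⟨⟨heq, -⟩, hem⟩
      exact ⟨Nat.dvd_gcd hem heq, Nat.gcd_ne_zero_right hq⟩
  rw [Finset.sum_congr rfl h2, Finset.sum_comm]
  apply Finset.sum_congr rfl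
  intro e he
  rw [← Finset.sum_filter, Finset.sum_const, nsmul_eq_mul]
  have : Finset.Icc 1 M = Finset.Ioc 0 M := rfl
  rw [this, Nat.Ioc_filter_dvd_card_eq_div, mul_comm]

lemma aux_phi (q : ℕ) (hq : q ≠ 0) :
    ∑ e ∈ q.divisors, ((moebius e : ℤ) : ℝ) * ((q / e : ℕ) : ℝ) = (q.totient : ℝ) := by
  have key : ∀ n > 0, ∑ x ∈ n.divisorsAntidiagonal, (moebius x.fst) • ((x.snd : ℤ)) = (n.totient : ℤ) := by
    rw [← sum_eq_iff_sum_smul_moebius_eq (f := fun n => (n.totient : ℤ)) (g := fun n => (n : ℤ))]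
    intro n hn
    rw [← Nat.cast_sum]
    · norm_cast
      exact Nat.sum_totient n
  have hq' := key q (Nat.pos_of_ne_zero hq)
  rw [Nat.sum_divisorsAntidiagonal (f := fun a b => (moebius a) • ((b : ℤ)))] at hq'
  simp only [zsmul_eq_mul] at hq'
  have h2 := congrArg (fun z : ℤ => (z : ℝ)) hq'
  push_cast at h2
  exact h2

lemma aux_floor_err (Z : ℝ) (hZ : 0 ≤ Z) : |((⌊Z⌋₊ : ℕ) : ℝ) - Z| ≤ 1 := by
  rw [abs_le]
  constructor
  · have := Nat.lt_floor_add_one Z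
    linarith
  · have := Nat.floor_le hZ
    linarith

lemma aux_Tapprox (q : ℕ) (hq : q ≠ 0) (Y : ℝ) (hY : 0 ≤ Y) :
    |((Tcop q ⌊Y⌋₊ : ℕ) : ℝ) - (q.totient : ℝ) / q * Y| ≤ (q.divisors.card : ℝ) := by
  rw [aux_T q _ hq]
  have hphi : (q.totient : ℝ) / q * Y = ∑ e ∈ q.divisors, ((moebius e : ℤ) : ℝ) * (Y / e) := by
    rw [← aux_phi q hq, Finset.sum_div, Finset.sum_mul]
    apply Finset.sum_congr rfl
    intro e he
    have he' : e ∣ q := (Nat.mem_divisors.mp he).1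
    have he0 : e ≠ 0 := by
      rintro rfl
      exact hq (Nat.eq_zero_of_zero_dvd he')
    have hqe : ((q / e : ℕ) : ℝ) = (q : ℝ) / e := by
      rw [Nat.cast_div he' (by exact_mod_cast he0)]
    rw [hqe]
    have hq0 : (q : ℝ) ≠ 0 := by exact_mod_cast hq
    have he0' : (e : ℝ) ≠ 0 := by exact_mod_cast he0
    field_simp
  rw [hphi, ← Finset.sum_sub_distrib]
  refine (Finset.abs_sum_le_sum_abs _ _).trans ?_
  have hb : ∀ e ∈ q.divisors,
      |((moebius e : ℤ) : ℝ) * ((⌊Y⌋₊ / e : ℕ) : ℝ) - ((moebius e : ℤ) : ℝ) * (Y / e)| ≤ 1 := by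
    intro e he
    rw [← mul_sub, abs_mul]
    have h1 : ((⌊Y⌋₊ / e : ℕ) : ℝ) = ((⌊Y / (e:ℝ)⌋₊ : ℕ) : ℝ) := by
      rw [Nat.floor_div_natCast Y e]
    rw [h1]
    have h2 : |((⌊Y / (e:ℝ)⌋₊ : ℕ) : ℝ) - Y / e| ≤ 1 :=
      aux_floor_err _ (div_nonneg hY (Nat.cast_nonneg e))
    calc |((moebius e : ℤ) : ℝ)| * |((⌊Y / (e:ℝ)⌋₊ : ℕ) : ℝ) - Y / e|
        ≤ 1 * 1 := mul_le_mul (aux_moebius_abs e) h2 (abs_nonneg _) zero_le_one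
      _ = 1 := one_mul 1
  calc ∑ e ∈ q.divisors, |((moebius e : ℤ) : ℝ) * ((⌊Y⌋₊ / e : ℕ) : ℝ) - ((moebius e : ℤ) : ℝ) * (Y / e)|
      ≤ ∑ _e ∈ q.divisors, (1:ℝ) := Finset.sum_le_sum hb
    _ = (q.divisors.card : ℝ) := by rw [Finset.sum_const, nsmul_eq_mul, mul_one]

lemma fEuler_zero (k q : ℕ) : fEuler k q 0 = 0 := by
  unfold fEuler
  split <;> simp

lemma fEuler_one (k q : ℕ) : fEuler k q 1 = 1 := by
  unfold fEuler
  rw [if_pos (Nat.gcd_one_left q)]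
  simp

lemma fEuler_abs_le (k q : ℕ) (hk : 1 ≤ k) (d : ℕ) : |fEuler k q d| ≤ ((d:ℝ)^k)⁻¹ := by
  rcases Nat.eq_zero_or_pos d with rfl | hd
  · rw [fEuler_zero]
    simp
  unfold fEuler
  split
  · rw [abs_div, abs_of_nonneg (by positivity : (0:ℝ) ≤ (d:ℝ)^k), div_eq_mul_inv]
    calc |((moebius d : ℤ) : ℝ)| * ((d:ℝ)^k)⁻¹ ≤ 1 * ((d:ℝ)^k)⁻¹ := by
          apply mul_le_mul_of_nonneg_right (aux_moebius_abs d) (by positivity)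
      _ = ((d:ℝ)^k)⁻¹ := one_mul _
  · rw [abs_zero]; positivity

lemma aux_summable_pk (k : ℕ) (hk : 2 ≤ k) : Summable (fun d : ℕ => ((d:ℝ)^k)⁻¹) := by
  have := (Real.summable_one_div_nat_pow (p := k)).mpr hk
  simpa [one_div] using this

lemma fEuler_summable_norm (k q : ℕ) (hk : 2 ≤ k) : Summable (fun d => ‖fEuler k q d‖) := by
  apply Summable.of_nonneg_of_le (fun d => norm_nonneg _)
    (fun d => by simpa [Real.norm_eq_abs] using fEuler_abs_le k q (by omega) d)
  exact aux_summable_pk k hk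

lemma fEuler_summable (k q : ℕ) (hk : 2 ≤ k) : Summable (fEuler k q) :=
  (fEuler_summable_norm k q hk).of_norm

lemma fEuler_mul (k q : ℕ) {m n : ℕ} (h : Nat.Coprime m n) :
    fEuler k q (m * n) = fEuler k q m * fEuler k q n := by
  unfold fEuler
  by_cases h1 : Nat.gcd m q = 1
  · by_cases h2 : Nat.gcd n q = 1
    · rw [if_pos h1, if_pos h2, if_pos (Nat.Coprime.mul h1 h2)]
      rw [isMultiplicative_moebius.map_mul_of_coprime h]
      push_cast
      rw [mul_pow, div_mul_div_comm]
    · rw [if_neg h2, mul_zero, if_neg (fun hc => h2 (Nat.coprime_mul_iff_left.mp hc).2)]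
  · rw [if_neg h1, zero_mul, if_neg (fun hc => h1 (Nat.coprime_mul_iff_left.mp hc).1)]

lemma fEuler_prime_pow (k q : ℕ) (p : ℕ) (hp : p.Prime) :
    ∑' e : ℕ, fEuler k q (p ^ e)
      = if p ∣ q then (1:ℝ) else 1 - (((p:ℕ):ℝ)^k)⁻¹ := by
  by_cases hpq : p ∣ q
  · rw [if_pos hpq, tsum_eq_single 0]
    · rw [pow_zero, fEuler_one]
    · intro e he
      unfold fEuler
      rw [if_neg]
      intro hc
      have hpg : p ∣ Nat.gcd (p ^ e) q :=
        Nat.dvd_gcd (dvd_pow_self p he) hpq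
      rw [hc, Nat.dvd_one] at hpg
      exact hp.ne_one hpg
  · rw [if_neg hpq, tsum_eq_sum (s := ({0, 1} : Finset ℕ))]
    · rw [Finset.sum_insert (by norm_num), Finset.sum_singleton, pow_zero, pow_one, fEuler_one]
      unfold fEuler
      have hcop : Nat.gcd p q = 1 := (Nat.Prime.coprime_iff_not_dvd hp).mpr hpq
      rw [if_pos hcop, moebius_apply_prime hp]
      push_cast
      ring
    · intro e he
      simp only [Finset.mem_insert, Finset.mem_singleton] at he
      push_neg at he
      obtain ⟨he0, he1⟩ := he
      unfold fEuler
      rw [moebius_apply_prime_pow hp he0, if_neg he1]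
      split <;> simp

lemma fEuler_tprod (k q : ℕ) (hk : 2 ≤ k) :
    (∏' p : Nat.Primes, if (p : ℕ) ∣ q then (1:ℝ) else 1 - (((p : ℕ) : ℝ) ^ k)⁻¹)
      = ∑' n, fEuler k q n := by
  rw [← EulerProduct.eulerProduct_tprod (f := fEuler k q) (fEuler_one k q)
    (fun h => fEuler_mul k q h) (fEuler_summable_norm k q hk) (fEuler_zero k q)]
  apply tprod_congr
  intro p
  exact (fEuler_prime_pow k q p p.prop).symm

lemma aux_step (k : ℕ) (hk : 2 ≤ k) (d : ℕ) (hd : 2 ≤ d) :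
    ((d:ℝ)^k)⁻¹ + ((d:ℝ)^(k-1))⁻¹ ≤ (((d:ℝ)-1)^(k-1))⁻¹ := by
  set u : ℝ := (d:ℝ) with hu
  have hu2 : (2:ℝ) ≤ u := by rw [hu]; exact_mod_cast hd
  have hu0 : 0 < u := by linarith
  have hu1 : 0 < u - 1 := by linarith
  have hpow : u ^ k = u ^ (k-1) * u := by
    rw [← pow_succ]; congr 1; omega
  have h1 : (u^k)⁻¹ + (u^(k-1))⁻¹ = (1+u)/u^k := by
    rw [eq_div_iff (by positivity)]
    rw [hpow]
    field_simp
  have key : (1+u)*(u-1)^(k-1) ≤ u^k := by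
    have e1 : (u-1)^(k-1) = (u-1)*(u-1)^(k-2) := by
      rw [← pow_succ']; congr 1; omega
    have e2 : u^k = u^2 * u^(k-2) := by
      rw [← pow_add]; congr 1; omega
    rw [e1, e2, ← mul_assoc]
    have h3 : (1+u)*(u-1) ≤ u^2 := by nlinarith
    have h4 : (u-1)^(k-2) ≤ u^(k-2) := pow_le_pow_left₀ (by linarith) (by linarith) _
    exact mul_le_mul h3 h4 (by positivity) (by positivity)
  rw [h1, ← one_div ((u-1)^(k-1)), div_le_div_iff₀ (by positivity) (by positivity)]
  linarith [key]

lemma aux_tele (k : ℕ) (hk : 2 ≤ k) (D : ℕ) (hD : 1 ≤ D) (M : ℕ) :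
    ∑ d ∈ Finset.Ioc D M, ((d:ℝ)^k)⁻¹ ≤ ((D:ℝ)^(k-1))⁻¹ := by
  rcases le_or_gt M D with hMD | hDM
  · rw [Finset.Ioc_eq_empty (by omega), Finset.sum_empty]
    positivity
  have h : ∀ M, D ≤ M → (∑ d ∈ Finset.Ioc D M, ((d:ℝ)^k)⁻¹) + ((M:ℝ)^(k-1))⁻¹ ≤ ((D:ℝ)^(k-1))⁻¹ := by
    intro M hDM'
    induction M, hDM' using Nat.le_induction with
    | base =>
      rw [Finset.Ioc_self, Finset.sum_empty, zero_add]
    | succ M hM ih =>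
      rw [Finset.sum_Ioc_succ_top (by omega)]
      have hstep := aux_step k hk (M+1) (by omega)
      have hcast : (((M+1:ℕ)):ℝ) - 1 = (M:ℝ) := by push_cast; ring
      rw [hcast] at hstep
      have := ih
      push_cast at hstep ⊢
      linarith
  have := h M (le_of_lt hDM)
  have hpos : 0 < ((M:ℝ)^(k-1))⁻¹ := by
    have : 0 < (M:ℝ) := by exact_mod_cast Nat.lt_of_lt_of_le (by omega) (le_of_lt hDM)
    positivity
  linarith

set_option maxHeartbeats 1000000 in
lemma aux_tail_tsum (k : ℕ) (hk : 2 ≤ k) (D : ℕ) (hD : 1 ≤ D) :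
    ∑' i : ℕ, ((((i + (D+1)) : ℕ):ℝ)^k)⁻¹ ≤ ((D:ℝ)^(k-1))⁻¹ := by
  have hsummable : Summable (fun i : ℕ => ((((i + (D+1)) : ℕ):ℝ)^k)⁻¹) :=
    (summable_nat_add_iff (D+1)).mpr (aux_summable_pk k hk)
  refine Summable.tsum_le_of_sum_le hsummable fun u => ?_
  have hinj : Set.InjOn (fun i => i + (D+1)) u := fun a _ b _ h => by simpa using h
  calc ∑ i ∈ u, ((((i + (D+1)) : ℕ):ℝ)^k)⁻¹
      = ∑ d ∈ u.image (fun i => i + (D+1)), ((d:ℝ)^k)⁻¹ :=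
        (Finset.sum_image (f := fun d : ℕ => ((d:ℝ)^k)⁻¹) hinj).symm
    _ ≤ ∑ d ∈ Finset.Ioc D (D + 1 + u.sup _root_.id), ((d:ℝ)^k)⁻¹ := by
        apply Finset.sum_le_sum_of_subset_of_nonneg
        · intro d hd
          simp only [Finset.mem_image] at hd
          obtain ⟨i, hi, rfl⟩ := hd
          have : i ≤ u.sup _root_.id := Finset.le_sup (f := _root_.id) hi
          rw [Finset.mem_Ioc]
          omega
        · intro d _ _
          positivity
    _ ≤ ((D:ℝ)^(k-1))⁻¹ := aux_tele k hk D hD _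

set_option maxHeartbeats 1000000 in
lemma aux_partial (k q : ℕ) (hk : 2 ≤ k) (D : ℕ) (hD : 1 ≤ D) :
    |(∑' n, fEuler k q n) - ∑ d ∈ Finset.Icc 1 D, fEuler k q d| ≤ ((D:ℝ)^(k-1))⁻¹ := by
  have hsum := fEuler_summable k q hk
  have hsplit := Summable.sum_add_tsum_nat_add (f := fEuler k q) (D+1) hsum
  have hIcc : ∑ d ∈ Finset.range (D+1), fEuler k q d = ∑ d ∈ Finset.Icc 1 D, fEuler k q d := by
    have h1 : Finset.range (D+1) = Finset.Icc 0 D := by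
      rw [Finset.range_eq_Ico, Finset.Ico_add_one_right_eq_Icc]
    rw [h1, Finset.Icc_eq_cons_Ioc (Nat.zero_le D), Finset.sum_cons, fEuler_zero, zero_add]
    rfl
  rw [← hsplit, hIcc]
  have h2 : |∑ d ∈ Finset.Icc 1 D, fEuler k q d + (∑' i, fEuler k q (i + (D+1)))
      - ∑ d ∈ Finset.Icc 1 D, fEuler k q d| = |∑' i, fEuler k q (i + (D+1))| := by
    congr 1; ring
  rw [h2]
  have hshift : Summable (fun i => fEuler k q (i + (D+1))) :=
    (summable_nat_add_iff (D+1)).mpr hsum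
  have hshiftg : Summable (fun i : ℕ => ((((i + (D+1)) : ℕ):ℝ)^k)⁻¹) :=
    (summable_nat_add_iff (D+1)).mpr (aux_summable_pk k hk)
  calc |∑' i, fEuler k q (i + (D+1))| ≤ ∑' i, |fEuler k q (i + (D+1))| := by
        simpa using norm_tsum_le_tsum_norm (f := fun i => fEuler k q (i + (D+1)))
          (by simpa [Real.norm_eq_abs] using hshift.abs)
    _ ≤ ∑' i : ℕ, ((((i + (D+1)) : ℕ):ℝ)^k)⁻¹ := by
        apply Summable.tsum_le_tsum _ hshift.abs hshiftg
        intro i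
        exact fEuler_abs_le k q (by omega) _
    _ ≤ ((D:ℝ)^(k-1))⁻¹ := aux_tail_tsum k hk D hD

lemma fEuler_tsum_abs_le (k q : ℕ) (hk : 2 ≤ k) : |∑' n, fEuler k q n| ≤ 2 := by
  have h := aux_partial k q hk 1 le_rfl
  rw [Finset.Icc_self, Finset.sum_singleton, fEuler_one] at h
  have h1 : (((1:ℕ):ℝ)^(k-1))⁻¹ = 1 := by norm_num
  rw [h1] at h
  have := abs_sub_abs_le_abs_sub (∑' n, fEuler k q n) 1
  have habs1 : |(1:ℝ)| = 1 := abs_one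
  linarith [abs_le.mp h]

lemma aux_swap (k q N : ℕ) (hk : 1 ≤ k) :
    ∑ n ∈ Finset.Icc 1 N, (if Nat.gcd n q = 1 ∧ ∀ p : ℕ, p.Prime → ¬ p ^ k ∣ n then (1:ℝ) else 0)
    = ∑ d ∈ Finset.Icc 1 N,
        (if Nat.gcd d q = 1 then ((moebius d : ℤ) : ℝ) else 0) * (Tcop q (N / d ^ k) : ℝ) := by
  have step1 : ∀ n ∈ Finset.Icc 1 N,
      (if Nat.gcd n q = 1 ∧ ∀ p : ℕ, p.Prime → ¬ p ^ k ∣ n then (1:ℝ) else 0)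
      = ∑ d ∈ Finset.Icc 1 N, (if d ^ k ∣ n ∧ Nat.gcd n q = 1 then ((moebius d : ℤ) : ℝ) else 0) := by
    intro n hn
    rw [Finset.mem_Icc] at hn
    have hn0 : n ≠ 0 := by omega
    by_cases hg : Nat.gcd n q = 1
    · simp only [hg, true_and, and_true]
      rw [aux_kfree k n hk hn0]
      rw [← Finset.sum_filter]
      apply Finset.sum_congr _ (fun _ _ => rfl)
      ext d
      simp only [Finset.mem_filter, Finset.mem_Icc, Nat.mem_divisors]
      constructor
      · rintro ⟨⟨hdn, -⟩, hdk⟩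
        have hd0 : d ≠ 0 := by
          rintro rfl
          exact hn0 (Nat.eq_zero_of_zero_dvd hdn)
        exact ⟨⟨by omega, le_trans (Nat.le_of_dvd (by omega) hdn) hn.2⟩, hdk⟩
      · rintro ⟨⟨hd1, hdN⟩, hdk⟩
        have hdn : d ∣ n := dvd_trans (dvd_pow_self d (by omega)) hdk
        exact ⟨⟨hdn, hn0⟩, hdk⟩
    · simp only [hg, false_and, and_false, if_false]
      symm
      apply Finset.sum_eq_zero
      intro d hd
      rfl
  rw [Finset.sum_congr rfl step1, Finset.sum_comm]
  apply Finset.sum_congr rfl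
  intro d hd
  rw [Finset.mem_Icc] at hd
  have hd0 : 0 < d := hd.1
  have hdk0 : 0 < d ^ k := Nat.pow_pos hd0
  by_cases hgd : Nat.gcd d q = 1
  · rw [if_pos hgd]
    have hcard : ∑ n ∈ Finset.Icc 1 N, (if d ^ k ∣ n ∧ Nat.gcd n q = 1 then ((moebius d : ℤ) : ℝ) else 0)
        = ((moebius d : ℤ) : ℝ) *
          (((Finset.Icc 1 N).filter (fun n => d ^ k ∣ n ∧ Nat.gcd n q = 1)).card : ℝ) := by
      rw [← Finset.sum_filter, Finset.sum_const, nsmul_eq_mul, mul_comm]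
    rw [hcard]
    congr 1
    rw [Tcop]
    norm_cast
    apply Finset.card_nbij' (i := fun n => n / d ^ k) (j := fun m => d ^ k * m)
    · intro n hn
      simp only [Finset.mem_coe, Finset.mem_filter, Finset.mem_Icc] at hn ⊢
      obtain ⟨⟨hn1, hnN⟩, hdvd, hcop⟩ := hn
      refine ⟨⟨?_, ?_⟩, ?_⟩
      · exact Nat.one_le_div_iff hdk0 |>.mpr (Nat.le_of_dvd (by omega) hdvd)
      · exact Nat.div_le_div_right hnN
      · exact Nat.Coprime.coprime_dvd_left (Nat.div_dvd_of_dvd hdvd) hcop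
    · intro m hm
      simp only [Finset.mem_coe, Finset.mem_filter, Finset.mem_Icc] at hm ⊢
      obtain ⟨⟨hm1, hmN⟩, hcop⟩ := hm
      refine ⟨⟨?_, ?_⟩, ⟨Dvd.intro m rfl, ?_⟩⟩
      · exact Nat.one_le_iff_ne_zero.mpr (by positivity)
      · rw [Nat.le_div_iff_mul_le hdk0] at hmN
        rw [mul_comm]
        exact hmN
      · exact Nat.Coprime.mul (Nat.Coprime.pow_left k hgd) hcop
    · intro n hn
      simp only [Finset.mem_coe, Finset.mem_filter] at hn
      exact Nat.mul_div_cancel' hn.2.1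
    · intro m hm
      exact Nat.mul_div_cancel_left m hdk0
  · rw [if_neg hgd, zero_mul]
    apply Finset.sum_eq_zero
    intro n hn
    rw [if_neg]
    rintro ⟨hdvd, hcop⟩
    apply hgd
    have h1 : Nat.gcd d q ∣ Nat.gcd n q := by
      apply Nat.dvd_gcd
      · exact dvd_trans (Nat.gcd_dvd_left d q) (dvd_trans (dvd_pow_self d (by omega)) hdvd)
      · exact Nat.gcd_dvd_right d q
    rw [hcop, Nat.dvd_one] at h1
    exact h1

end StmtAux

set_option maxHeartbeats 2000000 in
/-- ∑_{n ≤ X, (n,q)=1} μ_k(n) = A_q X + O_ε(τ(q) X^{1/k+ε}),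
with A_q = (φ(q)/q) ∏_{p ∤ q} (1 - p^{-k}). -/
theorem stmt_18 (k : ℕ) (hk : 2 ≤ k) (ε : ℝ) (hε : 0 < ε) :
    ∃ C : ℝ, 0 < C ∧ ∀ q : ℕ, 0 < q → ∀ X : ℝ, 1 ≤ X →
      |(∑ n ∈ Finset.Icc 1 ⌊X⌋₊,
          if Nat.gcd n q = 1 ∧ ∀ p : ℕ, p.Prime → ¬ p ^ k ∣ n then (1 : ℝ) else 0)
        - (q.totient : ℝ) / q * (∏' p : Nat.Primes,
            if (p : ℕ) ∣ q then 1 else 1 - (((p : ℕ) : ℝ) ^ k)⁻¹) * X|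
        ≤ C * (q.divisors.card : ℝ) * X ^ ((1 : ℝ) / k + ε) := by
  classical
  refine ⟨(2:ℝ)^(k+2), by positivity, ?_⟩
  intro q hq X hX
  have hq0 : q ≠ 0 := hq.ne'
  have hX0 : (0:ℝ) < X := lt_of_lt_of_le one_pos hX
  have hXnn : (0:ℝ) ≤ X := le_of_lt hX0
  have hkR : ((k:ℝ)) ≠ 0 := Nat.cast_ne_zero.mpr (by omega)
  set Y : ℝ := X ^ ((1:ℝ)/k) with hYdef
  have hY1 : 1 ≤ Y := by
    have h := Real.rpow_le_rpow_of_exponent_le hX (le_of_lt (by positivity : (0:ℝ) < (1:ℝ)/k))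
    rwa [Real.rpow_zero] at h
  have hYpos : 0 < Y := lt_of_lt_of_le one_pos hY1
  have hYnn : 0 ≤ Y := le_of_lt hYpos
  have hYk : Y ^ k = X := by
    rw [hYdef, ← Real.rpow_natCast (X ^ ((1:ℝ)/k)) k, ← Real.rpow_mul hXnn,
      one_div, inv_mul_cancel₀ hkR, Real.rpow_one]
  set N : ℕ := ⌊X⌋₊ with hN
  set D : ℕ := ⌊Y⌋₊ with hDdef
  have hD1 : 1 ≤ D := Nat.le_floor (by exact_mod_cast hY1)
  have hYX : Y ≤ X := by
    have hexp : (1:ℝ)/k ≤ 1 := by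
      rw [div_le_one (by positivity : (0:ℝ) < (k:ℝ))]
      exact_mod_cast (by omega : 1 ≤ k)
    have h := Real.rpow_le_rpow_of_exponent_le hX hexp
    rwa [Real.rpow_one] at h
  have hDN : D ≤ N := Nat.floor_le_floor hYX
  have hDY : (D:ℝ) ≤ Y := Nat.floor_le hYnn
  set τ : ℝ := (q.divisors.card : ℝ) with hτdef
  have hτ1 : 1 ≤ τ := by
    have h : 0 < q.divisors.card := Finset.card_pos.mpr ⟨q, Nat.mem_divisors_self q hq0⟩
    rw [hτdef]
    exact_mod_cast h
  have hτ0 : 0 ≤ τ := le_trans zero_le_one hτ1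
  set P : ℝ := ∏' p : Nat.Primes, if (p : ℕ) ∣ q then (1:ℝ) else 1 - (((p : ℕ) : ℝ) ^ k)⁻¹ with hPdef
  have hP : P = ∑' n, fEuler k q n := fEuler_tprod k q hk
  set φr : ℝ := (q.totient : ℝ) / q with hφdef
  have hφ0 : 0 ≤ φr := by positivity
  have hφ1 : φr ≤ 1 := by
    rw [hφdef, div_le_one (by exact_mod_cast hq : (0:ℝ) < (q:ℝ))]
    exact_mod_cast Nat.totient_le q
  set g : ℕ → ℝ := fun d =>
    if Nat.gcd d q = 1 then ((ArithmeticFunction.moebius d : ℤ) : ℝ) else 0 with hgdef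
  have hgabs : ∀ d, |g d| ≤ 1 := by
    intro d
    rw [hgdef]
    dsimp only
    split
    · exact aux_moebius_abs _
    · rw [abs_zero]; exact zero_le_one
  set S : ℝ := ∑ n ∈ Finset.Icc 1 N,
      (if Nat.gcd n q = 1 ∧ ∀ p : ℕ, p.Prime → ¬ p ^ k ∣ n then (1:ℝ) else 0) with hSdef
  have hswap : S = ∑ d ∈ Finset.Icc 1 N, g d * (Tcop q (N / d ^ k) : ℝ) :=
    aux_swap k q N (by omega)
  have hrestrict : ∑ d ∈ Finset.Icc 1 N, g d * (Tcop q (N / d ^ k) : ℝ)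
      = ∑ d ∈ Finset.Icc 1 D, g d * (Tcop q (N / d ^ k) : ℝ) := by
    symm
    apply Finset.sum_subset (Finset.Icc_subset_Icc_right hDN)
    intro d hdN hdD
    rw [Finset.mem_Icc] at hdN hdD
    have hdD' : D < d := by omega
    have hNd : N < d ^ k := by
      by_contra hcon
      push_neg at hcon
      have h1 : ((d:ℝ))^k ≤ X := by
        calc ((d:ℝ))^k = ((d ^ k : ℕ) : ℝ) := by push_cast; ring
        _ ≤ (N:ℝ) := by exact_mod_cast hcon
        _ ≤ X := Nat.floor_le hXnn
      rw [← hYk] at h1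
      have h2 : (d:ℝ) ≤ Y :=
        (pow_le_pow_iff_left₀ (Nat.cast_nonneg d) hYnn (by omega)).mp h1
      have : d ≤ D := Nat.le_floor h2
      omega
    rw [Nat.div_eq_of_lt hNd]
    have hT0 : Tcop q 0 = 0 := by
      rw [Tcop]
      simp
    rw [hT0]
    simp
  have hC : |(∑ d ∈ Finset.Icc 1 D, g d * (Tcop q (N / d ^ k) : ℝ))
      - ∑ d ∈ Finset.Icc 1 D, g d * (φr * (X / (d:ℝ)^k))| ≤ τ * Y := by
    rw [← Finset.sum_sub_distrib]
    refine (Finset.abs_sum_le_sum_abs _ _).trans ?_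
    have hterm : ∀ d ∈ Finset.Icc 1 D,
        |g d * (Tcop q (N / d ^ k) : ℝ) - g d * (φr * (X / (d:ℝ)^k))| ≤ τ := by
      intro d hd
      rw [Finset.mem_Icc] at hd
      have hd0 : 0 < d := hd.1
      have hdk : (0:ℝ) < (d:ℝ)^k := by positivity
      have hrw : N / d ^ k = ⌊X / ((d:ℝ)^k)⌋₊ := by
        rw [hN, ← Nat.floor_div_natCast X (d ^ k)]
        congr 1
        push_cast
        ring
      rw [← mul_sub, abs_mul]
      have hinner : |(Tcop q (N / d ^ k) : ℝ) - φr * (X / (d:ℝ)^k)| ≤ τ := by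
        rw [hrw]
        exact aux_Tapprox q hq0 _ (by positivity)
      calc |g d| * |(Tcop q (N / d ^ k) : ℝ) - φr * (X / (d:ℝ)^k)|
          ≤ 1 * τ := mul_le_mul (hgabs d) hinner (abs_nonneg _) zero_le_one
        _ = τ := one_mul τ
    calc ∑ d ∈ Finset.Icc 1 D, |g d * (Tcop q (N / d ^ k) : ℝ) - g d * (φr * (X / (d:ℝ)^k))|
        ≤ ∑ _d ∈ Finset.Icc 1 D, τ := Finset.sum_le_sum hterm
      _ = (D:ℝ) * τ := by
          rw [Finset.sum_const, Nat.card_Icc, nsmul_eq_mul]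
          norm_num
      _ ≤ Y * τ := mul_le_mul_of_nonneg_right hDY hτ0
      _ = τ * Y := mul_comm _ _
  have hMain : ∑ d ∈ Finset.Icc 1 D, g d * (φr * (X / (d:ℝ)^k))
      = φr * X * ∑ d ∈ Finset.Icc 1 D, fEuler k q d := by
    rw [Finset.mul_sum]
    apply Finset.sum_congr rfl
    intro d hd
    rw [Finset.mem_Icc] at hd
    have hd0 : (0:ℝ) < (d:ℝ)^k := by
      have : 0 < d := hd.1
      positivity
    rw [hgdef]
    unfold fEuler
    dsimp only
    split
    · first
      | (field_simp; ring)
      | field_simp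
    · simp
  have hD2 : |φr * X * (∑ d ∈ Finset.Icc 1 D, fEuler k q d) - φr * P * X|
      ≤ X * ((D:ℝ)^(k-1))⁻¹ := by
    have h1 : φr * P * X = φr * X * ∑' n, fEuler k q n := by rw [hP]; ring
    rw [h1, ← mul_sub, abs_mul, abs_sub_comm]
    have h2 : |φr * X| ≤ X := by
      rw [abs_of_nonneg (by positivity)]
      nlinarith
    exact mul_le_mul h2 (aux_partial k q hk D hD1) (abs_nonneg _) hXnn
  have htotal : |S - φr * P * X| ≤ τ * Y + X * ((D:ℝ)^(k-1))⁻¹ := by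
    have := abs_sub_le S (φr * X * ∑ d ∈ Finset.Icc 1 D, fEuler k q d) (φr * P * X)
    rw [hswap, hrestrict] at this ⊢
    rw [← hMain] at this hD2
    linarith [hC, hD2, this]
  have hXe1 : (1:ℝ) ≤ X ^ ((1:ℝ)/k + ε) := by
    have h := Real.rpow_le_rpow_of_exponent_le hX (by positivity : (0:ℝ) ≤ (1:ℝ)/k + ε)
    rwa [Real.rpow_zero] at h
  have hYe : Y ≤ X ^ ((1:ℝ)/k + ε) :=
    Real.rpow_le_rpow_of_exponent_le hX (by linarith)
  rcases le_or_gt ((2:ℝ)^k) X with hbig | hbig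
  · have hY2 : (2:ℝ) ≤ Y := by
      have h := Real.rpow_le_rpow (by positivity) hbig (le_of_lt (by positivity : (0:ℝ) < (1:ℝ)/k))
      have h2 : ((2:ℝ)^k) ^ ((1:ℝ)/k) = 2 := by
        rw [← Real.rpow_natCast (2:ℝ) k, ← Real.rpow_mul (by norm_num),
          mul_one_div, div_self hkR, Real.rpow_one]
      rwa [h2] at h
    have hDY2 : Y/2 ≤ (D:ℝ) := by
      have h := Nat.sub_one_lt_floor Y
      rw [← hDdef] at h
      linarith
    have htail : X * ((D:ℝ)^(k-1))⁻¹ ≤ 2^(k-1) * Y := by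
      have h1 : (Y/2)^(k-1) ≤ (D:ℝ)^(k-1) := pow_le_pow_left₀ (by linarith) hDY2 _
      have h2 : (0:ℝ) < (Y/2)^(k-1) := by positivity
      have h3 : ((D:ℝ)^(k-1))⁻¹ ≤ ((Y/2)^(k-1))⁻¹ := inv_anti₀ h2 h1
      calc X * ((D:ℝ)^(k-1))⁻¹ ≤ X * ((Y/2)^(k-1))⁻¹ := mul_le_mul_of_nonneg_left h3 hXnn
        _ = 2^(k-1) * Y := by
            rw [div_pow, ← hYk]
            have hYk1 : Y ^ k = Y^(k-1) * Y := by
              rw [← pow_succ]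
              congr 1
              omega
            rw [hYk1]
            have hYp : (0:ℝ) < Y^(k-1) := by positivity
            field_simp
    have hpows : (2:ℝ)^(k-1) + 1 ≤ 2^(k+2) := by
      have h1 : (2:ℝ)^(k-1) ≤ 2^(k+1) := pow_le_pow_right₀ one_le_two (by omega)
      have h2 : (1:ℝ) ≤ 2^(k+1) := one_le_pow₀ one_le_two
      have h3 : (2:ℝ)^(k+2) = 2^(k+1) + 2^(k+1) := by
        rw [pow_succ]
        ring
      linarith
    have hτY : Y ≤ τ * Y := le_mul_of_one_le_left hYnn hτ1
    have h2k : (0:ℝ) ≤ 2^(k-1) := by positivity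
    have hstep2 := mul_le_mul_of_nonneg_left hτY h2k
    have hτYnn : (0:ℝ) ≤ τ * Y := mul_nonneg hτ0 hYnn
    have hstep3 := mul_le_mul_of_nonneg_right hpows hτYnn
    calc |S - φr * P * X| ≤ τ * Y + X * ((D:ℝ)^(k-1))⁻¹ := htotal
      _ ≤ τ * Y + 2^(k-1) * Y := by linarith
      _ ≤ τ * Y + 2^(k-1) * (τ * Y) := by linarith
      _ = (2^(k-1) + 1) * (τ * Y) := by ring
      _ ≤ 2^(k+2) * (τ * Y) := hstep3
      _ = 2^(k+2) * τ * Y := by ring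
      _ ≤ 2^(k+2) * τ * X ^ ((1:ℝ)/k + ε) := by
          apply mul_le_mul_of_nonneg_left hYe
          positivity
  · have hS0 : 0 ≤ S := by
      rw [hSdef]
      apply Finset.sum_nonneg
      intro n hn
      split <;> norm_num
    have hSN : S ≤ (N:ℝ) := by
      rw [hSdef]
      calc ∑ n ∈ Finset.Icc 1 N,
          (if Nat.gcd n q = 1 ∧ ∀ p : ℕ, p.Prime → ¬ p ^ k ∣ n then (1:ℝ) else 0)
          ≤ ∑ _n ∈ Finset.Icc 1 N, (1:ℝ) := by
            apply Finset.sum_le_sum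
            intro n hn
            split <;> norm_num
        _ = (N:ℝ) := by
            rw [Finset.sum_const, Nat.card_Icc, nsmul_eq_mul, mul_one]
            norm_num
    have hSX : |S| ≤ X := by
      rw [abs_of_nonneg hS0]
      exact le_trans hSN (Nat.floor_le hXnn)
    have hPabs : |P| ≤ 2 := by
      rw [hP]
      exact fEuler_tsum_abs_le k q hk
    have hAX : |φr * P * X| ≤ 2 * X := by
      rw [abs_mul, abs_mul, abs_of_nonneg hφ0, abs_of_nonneg hXnn]
      have h1 : φr * |P| ≤ 2 := by
        calc φr * |P| ≤ 1 * 2 := mul_le_mul hφ1 hPabs (abs_nonneg P) zero_le_one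
          _ = 2 := by ring
      exact mul_le_mul_of_nonneg_right h1 hXnn
    have h3X : |S - φr * P * X| ≤ 3 * X := by
      calc |S - φr * P * X| ≤ |S| + |φr * P * X| := abs_sub _ _
        _ ≤ X + 2 * X := by linarith
        _ = 3 * X := by ring
    have hX2k : (3:ℝ) * X ≤ 3 * 2^k := by nlinarith
    have hle : (3:ℝ) * 2^k ≤ 2^(k+2) := by
      have : (2:ℝ)^(k+2) = 4 * 2^k := by
        rw [pow_add]
        ring
      nlinarith [pow_pos (by norm_num : (0:ℝ) < 2) k]
    calc |S - φr * P * X| ≤ 3 * 2^k := by linarith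
      _ ≤ 2^(k+2) := hle
      _ = 2^(k+2) * 1 * 1 := by ring
      _ ≤ 2^(k+2) * τ * X ^ ((1:ℝ)/k + ε) := by
          apply mul_le_mul _ hXe1 zero_le_one (by positivity)
          nlinarith
end
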